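/- arXiv:1008.3122 — 5 statements merged into one kernel-verified Lean document; each statement's English description precedes it below -/
import Mathlib

section
/- Let U be an m×m matrix of rational functions on C that is paraunitary, i.e., U(z) U*(z) = I_m wherever both are defined, where U*(z) = conj(U(1/conj(z)))^T. Suppose all entries of U have no poles in the closed unit disk, and all entries of U^{-1} also have no poles in the open unit disk. Then U is a constant unitary matrix. -/
open Polynomial RatFunc

theorem eval_id (x : RatFunc ℂ) (z : ℂ) :
    x.eval (RingHom.id ℂ) z = x.num.eval z / x.denom.eval z := rfl

theorem eval_ne_zero_of_dvd {a b : Polynomial ℂ} (h : a ∣ b) {z : ℂ} (hb : b.eval z ≠ 0) :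
    a.eval z ≠ 0 := by
  obtain ⟨c, rfl⟩ := h
  simp only [Polynomial.eval_mul, mul_ne_zero_iff] at hb
  exact hb.1

theorem eval_div' (p q : Polynomial ℂ) {z : ℂ} (hq : q.eval z ≠ 0) :
    (algebraMap (Polynomial ℂ) (RatFunc ℂ) p / algebraMap _ _ q).eval (RingHom.id ℂ) z
      = p.eval z / q.eval z := by
  have hq0 : q ≠ 0 := fun h => hq (by simp [h])
  set x := algebraMap (Polynomial ℂ) (RatFunc ℂ) p / algebraMap _ _ q with hx
  have hdvd : x.denom ∣ q := RatFunc.denom_div_dvd p q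
  have hdz : x.denom.eval z ≠ 0 := eval_ne_zero_of_dvd hdvd hq
  have hcross : x.num * q = p * x.denom := by
    have h1 : algebraMap (Polynomial ℂ) (RatFunc ℂ) x.num / algebraMap _ _ x.denom
        = algebraMap (Polynomial ℂ) (RatFunc ℂ) p / algebraMap _ _ q := x.num_div_denom
    rw [div_eq_div_iff (RatFunc.algebraMap_ne_zero (x.denom_ne_zero))
      (RatFunc.algebraMap_ne_zero hq0), ← map_mul, ← map_mul] at h1
    exact RatFunc.algebraMap_injective ℂ h1
  rw [eval_id, div_eq_div_iff hdz hq]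
  have := congrArg (Polynomial.eval z) hcross
  simp only [Polynomial.eval_mul] at this
  exact this

theorem rev_eval (p : Polynomial ℂ) (z : ℂ) (hz : z ≠ 0) :
    p.reverse.eval z = z ^ p.natDegree * p.eval z⁻¹ := by
  letI : Invertible z⁻¹ := invertibleOfNonzero (inv_ne_zero hz)
  have h := Polynomial.eval₂_reverse_mul_pow (RingHom.id ℂ) z⁻¹ p
  simp only [invOf_eq_inv, inv_inv] at h
  have h2 : p.reverse.eval z * (z⁻¹) ^ p.natDegree = p.eval z⁻¹ := h
  rw [← h2, mul_left_comm, ← mul_pow, mul_inv_cancel₀ hz, one_pow, mul_one]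

theorem conj_eval (p : Polynomial ℂ) (x : ℂ) :
    (p.map (starRingEnd ℂ)).eval x = (starRingEnd ℂ) (p.eval ((starRingEnd ℂ) x)) := by
  rw [Polynomial.eval_map]
  have := Polynomial.eval₂_at_apply (p := p) (starRingEnd ℂ) ((starRingEnd ℂ) x)
  simpa using this

theorem natDegree_conj (p : Polynomial ℂ) : (p.map (starRingEnd ℂ)).natDegree = p.natDegree :=
  Polynomial.natDegree_map_eq_of_injective (starRingEnd ℂ).injective p

noncomputable def cflip (f : RatFunc ℂ) : RatFunc ℂ :=
  algebraMap (Polynomial ℂ) (RatFunc ℂ)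
      ((f.num.map (starRingEnd ℂ)).reverse * Polynomial.X ^ f.denom.natDegree) /
    algebraMap (Polynomial ℂ) (RatFunc ℂ)
      ((f.denom.map (starRingEnd ℂ)).reverse * Polynomial.X ^ f.num.natDegree)

theorem rev_conj_eval (p : Polynomial ℂ) {z : ℂ} (hz : z ≠ 0) :
    (p.map (starRingEnd ℂ)).reverse.eval z
      = z ^ p.natDegree * (starRingEnd ℂ) (p.eval ((starRingEnd ℂ) z)⁻¹) := by
  rw [rev_eval _ z hz, conj_eval, natDegree_conj, map_inv₀]

theorem cflip_denom_eval (f : RatFunc ℂ) {z : ℂ} (hz : z ≠ 0) :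
    ((f.denom.map (starRingEnd ℂ)).reverse * Polynomial.X ^ f.num.natDegree).eval z
      = z ^ (f.denom.natDegree + f.num.natDegree) *
        (starRingEnd ℂ) (f.denom.eval ((starRingEnd ℂ) z)⁻¹) := by
  rw [Polynomial.eval_mul, Polynomial.eval_pow, Polynomial.eval_X, rev_conj_eval _ hz, pow_add]
  ring

theorem cflip_denom_ne_zero (f : RatFunc ℂ) {z : ℂ} (hz : z ≠ 0)
    (hd : f.denom.eval ((starRingEnd ℂ) z)⁻¹ ≠ 0) :
    ((f.denom.map (starRingEnd ℂ)).reverse * Polynomial.X ^ f.num.natDegree).eval z ≠ 0 := by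
  rw [cflip_denom_eval f hz]
  exact mul_ne_zero (pow_ne_zero _ hz) (by simpa using hd)

theorem cflip_eval (f : RatFunc ℂ) {z : ℂ} (hz : z ≠ 0)
    (hd : f.denom.eval ((starRingEnd ℂ) z)⁻¹ ≠ 0) :
    (cflip f).eval (RingHom.id ℂ) z
      = (starRingEnd ℂ) (f.eval (RingHom.id ℂ) ((starRingEnd ℂ) z)⁻¹) := by
  rw [cflip, eval_div' _ _ (cflip_denom_ne_zero f hz hd), cflip_denom_eval f hz]
  rw [Polynomial.eval_mul, Polynomial.eval_pow, Polynomial.eval_X, rev_conj_eval _ hz]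
  rw [show f.eval (RingHom.id ℂ) ((starRingEnd ℂ) z)⁻¹
      = f.num.eval ((starRingEnd ℂ) z)⁻¹ / f.denom.eval ((starRingEnd ℂ) z)⁻¹ from rfl, map_div₀]
  rw [pow_add]
  have hzp : z ^ f.denom.natDegree ≠ 0 := pow_ne_zero _ hz
  have hzp2 : z ^ f.num.natDegree ≠ 0 := pow_ne_zero _ hz
  field_simp



theorem eval_sum' {ι : Type*} (s : Finset ι) (g : ι → RatFunc ℂ) (z : ℂ)
    (h : ∀ k ∈ s, (g k).denom.eval z ≠ 0) :
    (∑ k ∈ s, g k).denom.eval z ≠ 0 ∧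
      (∑ k ∈ s, g k).eval (RingHom.id ℂ) z = ∑ k ∈ s, (g k).eval (RingHom.id ℂ) z := by
  classical
  induction s using Finset.induction with
  | empty => simp [RatFunc.eval_zero]
  | @insert a s' hk ih =>
    have ha := h a (Finset.mem_insert_self a s')
    have hs := ih (fun k hk' => h k (Finset.mem_insert_of_mem hk'))
    rw [Finset.sum_insert hk, Finset.sum_insert hk]
    refine ⟨eval_ne_zero_of_dvd (RatFunc.denom_add_dvd _ _)
        (by simp only [Polynomial.eval_mul]; exact mul_ne_zero ha hs.1), ?_⟩
    rw [RatFunc.eval_add (f := RingHom.id ℂ) (a := z) ha hs.1, hs.2]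

theorem eval_mul' (x y : RatFunc ℂ) (z : ℂ) (hx : x.denom.eval z ≠ 0) (hy : y.denom.eval z ≠ 0) :
    (x * y).denom.eval z ≠ 0 ∧
      (x * y).eval (RingHom.id ℂ) z = x.eval (RingHom.id ℂ) z * y.eval (RingHom.id ℂ) z :=
  ⟨eval_ne_zero_of_dvd (RatFunc.denom_mul_dvd _ _)
      (by simp only [Polynomial.eval_mul]; exact mul_ne_zero hx hy),
    RatFunc.eval_mul (f := RingHom.id ℂ) (a := z) hx hy⟩

theorem ratfunc_eq_zero {x : RatFunc ℂ} {S : Set ℂ} (hS : S.Infinite)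
    (h : ∀ z ∈ S, x.denom.eval z ≠ 0 ∧ x.eval (RingHom.id ℂ) z = 0) : x = 0 := by
  by_contra hx
  have hnum : x.num ≠ 0 := fun h0 => hx (RatFunc.num_eq_zero_iff.mp h0)
  have hroot : ∀ z ∈ S, x.num.IsRoot z := by
    intro z hz
    have h1 := (h z hz).2
    have h2 := (h z hz).1
    rw [show x.eval (RingHom.id ℂ) z = x.num.eval z / x.denom.eval z from rfl,
      _root_.div_eq_zero_iff] at h1
    exact h1.resolve_right h2
  exact hnum (Polynomial.eq_zero_of_infinite_isRoot _ (hS.mono fun z hz => hroot z hz))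

theorem circle_infinite : Set.Infinite {z : ℂ | ‖z‖ = 1} := by
  apply Set.infinite_of_injective_forall_mem
    (f := fun n : ℕ => (⟨(1 - (n:ℝ)^2)/(1 + (n:ℝ)^2), 2*(n:ℝ)/(1 + (n:ℝ)^2)⟩ : ℂ))
  case hi =>
    intro a b hab
    have h1 : (0:ℝ) < 1 + (a:ℝ)^2 := by positivity
    have h2 : (0:ℝ) < 1 + (b:ℝ)^2 := by positivity
    have hre : (1 - (a:ℝ)^2)/(1 + (a:ℝ)^2) = (1 - (b:ℝ)^2)/(1 + (b:ℝ)^2) :=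
      congrArg Complex.re hab
    rw [div_eq_div_iff (ne_of_gt h1) (ne_of_gt h2)] at hre
    have hab2 : (a:ℝ) = b := by
      nlinarith [Nat.cast_nonneg (α := ℝ) a, Nat.cast_nonneg (α := ℝ) b]
    exact_mod_cast hab2
  case hf =>
    intro n
    have h1 : (0:ℝ) < 1 + (n:ℝ)^2 := by positivity
    simp only [Set.mem_setOf_eq, Complex.norm_def, Complex.normSq_mk]
    rw [show ((1 - (n:ℝ)^2)/(1 + (n:ℝ)^2) * ((1 - (n:ℝ)^2)/(1 + (n:ℝ)^2)) +
        2*(n:ℝ)/(1 + (n:ℝ)^2) * (2*(n:ℝ)/(1 + (n:ℝ)^2))) = 1 by field_simp; ring]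
    exact Real.sqrt_one

theorem reverse_reverse' {p : Polynomial ℂ} (h : p.coeff 0 ≠ 0) : p.reverse.reverse = p := by
  have hp : p ≠ 0 := fun h0 => h (by simp [h0])
  have ht : p.natTrailingDegree = 0 := Polynomial.natTrailingDegree_eq_zero.mpr (Or.inr h)
  have hN : p.reverse.natDegree = p.natDegree := by
    rw [Polynomial.reverse_natDegree, ht, Nat.sub_zero]
  ext n
  rw [Polynomial.coeff_reverse, hN, Polynomial.coeff_reverse, Polynomial.revAt_invol]

theorem monic_natDegree_zero {p : Polynomial ℂ} (hm : p.Monic) (h : p.natDegree = 0) :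
    p = 1 := by
  have := Polynomial.eq_C_of_natDegree_eq_zero h
  rw [this]
  have : p.coeff 0 = 1 := by
    have hl := hm.leadingCoeff
    rwa [Polynomial.leadingCoeff, h] at hl
  rw [this, Polynomial.C_1]

open Matrix ComplexOrder

/-- A rational paraunitary matrix function `U` such that `U` has no poles in the closed unit
disk and `U⁻¹` has no poles in the open unit disk is a constant unitary matrix. -/
theorem stmt6 {m : ℕ} (U : Matrix (Fin m) (Fin m) (RatFunc ℂ))
    (hpara : ∀ z : ℂ, z ≠ 0 →
      (∀ i j, Polynomial.eval z (U i j).denom ≠ 0) →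
      (∀ i j, Polynomial.eval ((starRingEnd ℂ) z)⁻¹ (U i j).denom ≠ 0) →
      (Matrix.of fun i j => (U i j).eval (RingHom.id ℂ) z) *
        (Matrix.of fun i j => (U i j).eval (RingHom.id ℂ) ((starRingEnd ℂ) z)⁻¹)ᴴ = 1)
    (hU : ∀ i j, ∀ z : ℂ, ‖z‖ ≤ 1 → Polynomial.eval z (U i j).denom ≠ 0)
    (hUinv : ∀ i j, ∀ z : ℂ, ‖z‖ < 1 → Polynomial.eval z (U⁻¹ i j).denom ≠ 0) :
    ∃ V : Matrix (Fin m) (Fin m) ℂ, V * Vᴴ = 1 ∧ ∀ i j, U i j = RatFunc.C (V i j) := by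
  classical
  set W : Matrix (Fin m) (Fin m) (RatFunc ℂ) := Matrix.of fun k l => cflip (U l k) with hW
  have hWkl : ∀ k l, W k l = cflip (U l k) := fun _ _ => rfl
  -- Step 1 : U * W = 1
  have hUW : U * W = 1 := by
    ext i j
    rw [← sub_eq_zero]
    apply ratfunc_eq_zero circle_infinite
    intro z hzc
    simp only [Set.mem_setOf_eq] at hzc
    have hz : z ≠ 0 := fun h => by simp [h] at hzc
    have hw : ((starRingEnd ℂ) z)⁻¹ = z := by
      apply inv_eq_of_mul_eq_one_right
      have h1 : (starRingEnd ℂ) z * z = ((‖z‖ : ℝ) : ℂ) ^ 2 := by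
        rw [mul_comm, Complex.mul_conj, Complex.normSq_eq_norm_sq]
        push_cast; ring
      rw [h1, hzc]; norm_num
    have hdU : ∀ a b, ((U a b).denom).eval z ≠ 0 := fun a b => hU a b z (le_of_eq hzc)
    have hdU' : ∀ a b, ((U a b).denom).eval ((starRingEnd ℂ) z)⁻¹ ≠ 0 := fun a b => by
      rw [hw]; exact hdU a b
    have hdW : ∀ k, ((W k j).denom).eval z ≠ 0 := fun k => by
      rw [hWkl]
      exact eval_ne_zero_of_dvd (RatFunc.denom_div_dvd _ _)
        (cflip_denom_ne_zero (U j k) hz (hdU' j k))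
    have hterm : ∀ k, (((U i k) * (W k j)).denom).eval z ≠ 0 :=
      fun k => (eval_mul' _ _ z (hdU i k) (hdW k)).1
    have hsum := eval_sum' Finset.univ (fun k => U i k * W k j) z (fun k _ => hterm k)
    have hmulapply : (U * W) i j = ∑ k, U i k * W k j := Matrix.mul_apply
    -- the constant entry
    have h1ij : (1 : Matrix (Fin m) (Fin m) (RatFunc ℂ)) i j
        = algebraMap (Polynomial ℂ) (RatFunc ℂ) (if i = j then 1 else 0) := by
      rw [Matrix.one_apply]; split_ifs <;> simp
    -- evaluation of the entry
    have heval : ((U * W) i j).eval (RingHom.id ℂ) z = if i = j then 1 else 0 := by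
      rw [hmulapply, hsum.2]
      have hterm_eval : ∀ k, (U i k * W k j).eval (RingHom.id ℂ) z
          = (U i k).eval (RingHom.id ℂ) z *
            (starRingEnd ℂ) ((U j k).eval (RingHom.id ℂ) ((starRingEnd ℂ) z)⁻¹) := by
        intro k
        rw [(eval_mul' _ _ z (hdU i k) (hdW k)).2, hWkl, cflip_eval (U j k) hz (hdU' j k)]
      have hp := hpara z hz (fun a b => hdU a b) (fun a b => hdU' a b)
      have hpij := congrFun (congrFun hp i) j
      rw [Matrix.mul_apply] at hpij
      simp only [Matrix.conjTranspose_apply, Matrix.of_apply, Matrix.one_apply] at hpij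
      calc ∑ k, (U i k * W k j).eval (RingHom.id ℂ) z
          = ∑ k, (U i k).eval (RingHom.id ℂ) z *
              (starRingEnd ℂ) ((U j k).eval (RingHom.id ℂ) ((starRingEnd ℂ) z)⁻¹) :=
            Finset.sum_congr rfl (fun k _ => hterm_eval k)
        _ = if i = j then 1 else 0 := hpij
    -- put together
    have hdx : (((U * W) i j).denom).eval z ≠ 0 := by rw [hmulapply]; exact hsum.1
    have hxsub : (U * W) i j - (1 : Matrix (Fin m) (Fin m) (RatFunc ℂ)) i j
        = (U * W) i j + algebraMap (Polynomial ℂ) (RatFunc ℂ) (-(if i = j then 1 else 0)) := by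
      rw [h1ij, map_neg, sub_eq_add_neg]
    constructor
    · rw [hxsub]
      apply eval_ne_zero_of_dvd (RatFunc.denom_add_dvd _ _)
      rw [Polynomial.eval_mul, RatFunc.denom_algebraMap]
      simpa using hdx
    · rw [hxsub, RatFunc.eval_add (f := RingHom.id ℂ) (a := z) hdx
        (by rw [RatFunc.denom_algebraMap]; simp)]
      rw [heval, RatFunc.eval_algebraMap]
      split_ifs <;> simp
  -- Step 2
  have hWinv : U⁻¹ = W := Matrix.inv_eq_right_inv hUW
  -- Step 3 : each entry is constant
  have hconst : ∀ i j, ∃ c : ℂ, U i j = RatFunc.C c := by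
    intro i j
    have hg : U⁻¹ j i = cflip (U i j) := by rw [hWinv]; exact hWkl j i
    by_cases hn : (U i j).num = 0
    · exact ⟨0, by rw [_root_.map_zero]; exact RatFunc.num_eq_zero_iff.mp hn⟩
    set n := (U i j).num with hn'
    set d := (U i j).denom with hd'
    set nc := n.map (starRingEnd ℂ) with hnc'
    set dc := d.map (starRingEnd ℂ) with hdc'
    set A := nc.reverse * Polynomial.X ^ d.natDegree with hA'
    set B := dc.reverse * Polynomial.X ^ n.natDegree with hB'
    have hd0 : d ≠ 0 := (U i j).denom_ne_zero
    have hnc0 : nc ≠ 0 := (Polynomial.map_ne_zero_iff (starRingEnd ℂ).injective).mpr hn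
    have hdc0 : dc ≠ 0 := (Polynomial.map_ne_zero_iff (starRingEnd ℂ).injective).mpr hd0
    have hB0 : B ≠ 0 := mul_ne_zero (by rwa [Ne, Polynomial.reverse_eq_zero])
      (pow_ne_zero _ Polynomial.X_ne_zero)
    have hA0 : A ≠ 0 := mul_ne_zero (by rwa [Ne, Polynomial.reverse_eq_zero])
      (pow_ne_zero _ Polynomial.X_ne_zero)
    have hgAB : U⁻¹ j i = algebraMap (Polynomial ℂ) (RatFunc ℂ) A /
        algebraMap (Polynomial ℂ) (RatFunc ℂ) B := hg
    -- all roots of B are in the open unit disc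
    have hroots : ∀ z : ℂ, B.eval z = 0 → ‖z‖ < 1 := by
      intro z h0
      by_cases hz : z = 0
      · simp [hz]
      rw [Polynomial.eval_mul, Polynomial.eval_pow, Polynomial.eval_X] at h0
      rcases mul_eq_zero.mp h0 with h1 | h1
      swap
      · exact absurd h1 (pow_ne_zero _ hz)
      rw [hdc', rev_conj_eval _ hz] at h1
      rcases mul_eq_zero.mp h1 with h2 | h2
      · exact absurd h2 (pow_ne_zero _ hz)
      have h3 : d.eval ((starRingEnd ℂ) z)⁻¹ = 0 := by
        simpa using h2
      have h4 : ¬ ‖((starRingEnd ℂ) z)⁻¹‖ ≤ 1 := fun hle => hU i j _ hle h3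
      rw [norm_inv, Complex.norm_conj, not_le] at h4
      have ha : 0 < ‖z‖ := by
        simpa [norm_pos_iff] using hz
      have hinv : (‖z‖)⁻¹ * ‖z‖ = 1 := inv_mul_cancel₀ (ne_of_gt ha)
      nlinarith
    -- the denominator of U⁻¹ j i is 1
    have hdg : (U⁻¹ j i).denom = 1 := by
      apply monic_natDegree_zero (RatFunc.monic_denom _)
      by_contra hne
      have hpos : 0 < (U⁻¹ j i).denom.natDegree := Nat.pos_of_ne_zero hne
      obtain ⟨z₀, hz₀⟩ := Complex.exists_root
        (Polynomial.natDegree_pos_iff_degree_pos.mp hpos)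
      have hdvd : (U⁻¹ j i).denom ∣ B := by rw [hgAB]; exact RatFunc.denom_div_dvd _ _
      obtain ⟨r, hr⟩ := hdvd
      have hB0z : B.eval z₀ = 0 := by
        rw [hr, Polynomial.eval_mul, hz₀, zero_mul]
      exact hUinv j i z₀ (hroots z₀ hB0z) hz₀
    set q := (U⁻¹ j i).num with hq'
    have hgq : U⁻¹ j i = algebraMap (Polynomial ℂ) (RatFunc ℂ) q := by
      conv_lhs => rw [← RatFunc.num_div_denom (U⁻¹ j i)]
      rw [hdg, _root_.map_one, div_one]
    have hqB : q * B = A := by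
      apply RatFunc.algebraMap_injective ℂ
      rw [_root_.map_mul]
      rw [← hgq, hgAB, div_mul_cancel₀ _ (RatFunc.algebraMap_ne_zero hB0)]
    have hq0 : q ≠ 0 := fun h => hA0 (by rw [← hqB, h, zero_mul])
    have hdcoeff : d.coeff 0 ≠ 0 := by
      rw [Polynomial.coeff_zero_eq_eval_zero]; exact hU i j 0 (by simp)
    have hdccoeff : dc.coeff 0 ≠ 0 := by
      rw [hdc', Polynomial.coeff_map]; simpa using hdcoeff
    -- degree bookkeeping
    have hdeg := congrArg Polynomial.natDegree hqB
    rw [Polynomial.natDegree_mul hq0 hB0, hB', hA',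
      Polynomial.natDegree_mul (by rwa [Ne, Polynomial.reverse_eq_zero])
        (pow_ne_zero _ Polynomial.X_ne_zero),
      Polynomial.natDegree_mul (by rwa [Ne, Polynomial.reverse_eq_zero])
        (pow_ne_zero _ Polynomial.X_ne_zero),
      Polynomial.natDegree_X_pow, Polynomial.natDegree_X_pow,
      Polynomial.reverse_natDegree, Polynomial.reverse_natDegree] at hdeg
    have htdc : dc.natTrailingDegree = 0 :=
      Polynomial.natTrailingDegree_eq_zero.mpr (Or.inr hdccoeff)
    have hncdeg : nc.natDegree = n.natDegree := natDegree_conj n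
    have hdcdeg : dc.natDegree = d.natDegree := natDegree_conj d
    have htle : nc.natTrailingDegree ≤ nc.natDegree := Polynomial.natTrailingDegree_le_natDegree _
    rw [htdc, hncdeg, hdcdeg] at hdeg
    rw [hncdeg] at htle
    have hNq : q.natDegree = 0 ∧ nc.natTrailingDegree = 0 := by omega
    have hqC : q = Polynomial.C (q.coeff 0) := Polynomial.eq_C_of_natDegree_eq_zero hNq.1
    have hnccoeff : nc.coeff 0 ≠ 0 := by
      rcases Polynomial.natTrailingDegree_eq_zero.mp hNq.2 with h | h
      · exact absurd h hnc0
      · exact h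
    -- reverse both sides of the key identity
    have hrev := congrArg Polynomial.reverse hqB
    rw [hqC, hB', hA', ← mul_assoc, Polynomial.reverse_mul_X_pow, Polynomial.reverse_mul_X_pow,
      Polynomial.reverse_mul_of_domain, Polynomial.reverse_C,
      reverse_reverse' hdccoeff, reverse_reverse' hnccoeff] at hrev
    -- hrev : C (q.coeff 0) * dc = nc
    have hkey2 := congrArg (Polynomial.map (starRingEnd ℂ)) hrev
    have hmapmap : ∀ p : Polynomial ℂ, (p.map (starRingEnd ℂ)).map (starRingEnd ℂ) = p := by
      intro p
      rw [Polynomial.map_map]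
      convert Polynomial.map_id using 2
      exact RingHom.ext fun x => Complex.conj_conj x
    rw [Polynomial.map_mul, Polynomial.map_C, hnc', hdc', hmapmap, hmapmap] at hkey2
    -- hkey2 : C (conj (q.coeff 0)) * d = n
    refine ⟨(starRingEnd ℂ) (q.coeff 0), ?_⟩
    have : U i j = algebraMap (Polynomial ℂ) (RatFunc ℂ) n /
        algebraMap (Polynomial ℂ) (RatFunc ℂ) d := (RatFunc.num_div_denom _).symm
    rw [this, ← hkey2, _root_.map_mul, mul_div_assoc,
      div_self (RatFunc.algebraMap_ne_zero hd0), mul_one, RatFunc.algebraMap_C]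
  -- Step 4 : assemble
  choose c hc using hconst
  refine ⟨Matrix.of c, ?_, fun i j => hc i j⟩
  have h1 : ∀ a b, ((U a b).denom).eval (1:ℂ) ≠ 0 := fun a b => hU a b 1 (by simp)
  have h2 : ∀ a b, ((U a b).denom).eval ((starRingEnd ℂ) (1:ℂ))⁻¹ ≠ 0 := fun a b => by
    rw [show (starRingEnd ℂ) (1:ℂ) = 1 by simp, inv_one]; exact h1 a b
  have hp := hpara 1 one_ne_zero h1 h2
  have hM : (Matrix.of fun a b => (U a b).eval (RingHom.id ℂ) (1:ℂ)) = Matrix.of c := by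
    ext a b
    simp only [Matrix.of_apply]
    rw [hc a b, RatFunc.eval_C, RingHom.id_apply]
  have hM' : (Matrix.of fun a b => (U a b).eval (RingHom.id ℂ) ((starRingEnd ℂ) (1:ℂ))⁻¹)
      = Matrix.of c := by
    ext a b
    rw [Matrix.of_apply, show (starRingEnd ℂ) (1:ℂ) = 1 by simp, inv_one]
    rw [hc a b, RatFunc.eval_C, RingHom.id_apply]
    rfl
  rw [hM, hM'] at hp
  exact hp
end

section
/- Let U(z) = sum_{n=0}^N ρ_n z^n be an m×m polynomial matrix function with ρ_N ≠ 0 (length N), unitary for all |z| = 1, so that det U(z) = c z^k with |c| = 1. Then k ≥ N. -/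
open Matrix ComplexOrder

open Polynomial in
private lemma circle_infinite_aux : {z : ℂ | ‖z‖ = 1}.Infinite := by
  have hIoo : (Set.Ioo (0:ℝ) 1).Infinite := Set.Ioo_infinite (by norm_num)
  have hinj : Set.InjOn (fun t : ℝ => Complex.exp (t * Complex.I)) (Set.Ioo 0 1) := by
    intro a ha b hb hab
    simp only [Complex.exp_eq_exp_iff_exists_int] at hab
    obtain ⟨n, hn⟩ := hab
    have h2 : (a : ℂ) = (b : ℂ) + n * (2 * Real.pi) := by
      have : (a : ℂ) * Complex.I = ((b : ℂ) + n * (2 * Real.pi)) * Complex.I := by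
        rw [hn]; ring
      exact mul_right_cancel₀ Complex.I_ne_zero this
    have h3 : a = b + n * (2 * Real.pi) := by exact_mod_cast h2
    have hn0 : n = 0 := by
      by_contra hne
      have h1 : (1:ℝ) ≤ |(n : ℝ)| := by
        rw [← Int.cast_abs]
        exact_mod_cast Int.one_le_abs hne
      have hpi : (2:ℝ) ≤ 2 * Real.pi := by nlinarith [Real.pi_gt_three]
      have habs : |a - b| = |(n:ℝ)| * (2 * Real.pi) := by
        rw [h3, add_sub_cancel_left, abs_mul,
          abs_of_nonneg (by positivity : (0:ℝ) ≤ 2 * Real.pi)]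
      have : |a - b| < 1 := by
        rw [abs_sub_lt_iff]
        constructor <;> nlinarith [ha.1, ha.2, hb.1, hb.2]
      nlinarith
    simpa [hn0] using h3
  have := (hIoo.image hinj)
  refine this.mono ?_
  rintro z ⟨t, _, rfl⟩
  exact Complex.norm_exp_ofReal_mul_I t

open Polynomial in
/-- If `U(z) = ∑_{n=0}^N ρₙ zⁿ` (with `ρ_N ≠ 0`) is unitary on the unit circle and
`det U(z) = c zᵏ` with `|c| = 1`, then `k ≥ N`. -/
theorem stmt8 {m N : ℕ} (ρ : ℕ → Matrix (Fin m) (Fin m) ℂ) (hρ : ρ N ≠ 0)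
    (U : ℂ → Matrix (Fin m) (Fin m) ℂ)
    (hU : ∀ z : ℂ, U z = ∑ n ∈ Finset.range (N + 1), z ^ n • ρ n)
    (hunit : ∀ z : ℂ, ‖z‖ = 1 → U z * (U z)ᴴ = 1)
    (c : ℂ) (k : ℕ) (hc : ‖c‖ = 1)
    (hdet : ∀ z : ℂ, (U z).det = c * z ^ k) :
    N ≤ k := by
  by_contra hk
  push_neg at hk
  classical
  have hc0 : c ≠ 0 := by
    intro h; rw [h] at hc; simp at hc
  set Up : Matrix (Fin m) (Fin m) ℂ[X] :=
    Matrix.of fun i j => ∑ n ∈ Finset.range (N+1), C ((ρ n) i j) * X ^ n with hUp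
  set Pp : Matrix (Fin m) (Fin m) ℂ[X] :=
    Matrix.of fun i j => ∑ n ∈ Finset.range (N+1),
      C (starRingEnd ℂ ((ρ n) j i)) * X ^ (N - n) with hPp
  have hUe : ∀ z : ℂ, Up.map (eval z) = U z := by
    intro z
    rw [hU]
    ext i j
    simp only [hUp, Matrix.map_apply, Matrix.of_apply, eval_finset_sum, Matrix.sum_apply,
      Matrix.smul_apply, smul_eq_mul, eval_mul, eval_C, eval_pow, eval_X]
    exact Finset.sum_congr rfl fun n _ => mul_comm _ _
  -- key pointwise identity on the circle
  have key0 : ∀ z : ℂ, ‖z‖ = 1 →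
      (c * z ^ k) • (Pp.map (eval z)) = (z ^ N) • (Up.adjugate.map (eval z)) := by
    intro z hz
    have hz0 : z ≠ 0 := by intro h; rw [h] at hz; simp at hz
    have hconj : starRingEnd ℂ z = z⁻¹ := by
      refine eq_inv_of_mul_eq_one_left ?_
      rw [mul_comm, Complex.mul_conj]
      norm_cast
      rw [Complex.normSq_eq_norm_sq, hz]; norm_num
    have hPe : Pp.map (eval z) = (z ^ N) • (U z)ᴴ := by
      ext i j
      rw [hU]
      simp only [hPp, Matrix.map_apply, Matrix.of_apply, eval_finset_sum,
        Matrix.smul_apply, Matrix.conjTranspose_apply, Matrix.sum_apply,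
        smul_eq_mul, ← starRingEnd_apply, map_sum, _root_.map_mul, map_pow, hconj]
      rw [Finset.mul_sum]
      refine Finset.sum_congr rfl fun n hn => ?_
      rw [Finset.mem_range] at hn
      have hle : n ≤ N := Nat.lt_succ_iff.mp hn
      simp only [eval_mul, eval_C, eval_pow, eval_X]
      rw [pow_sub₀ z hz0 hle]
      ring
    have hadj : U z * ((U z).adjugate) = (c * z ^ k) • 1 := by
      rw [Matrix.mul_adjugate, hdet]
    have hPmul : U z * (Pp.map (eval z)) = (z ^ N) • 1 := by
      rw [hPe, Matrix.mul_smul, hunit z hz]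
    have hadj' : (Up.adjugate.map (eval z)) = (U z).adjugate := by
      have h := (evalRingHom z).map_adjugate Up
      simp only [RingHom.mapMatrix_apply, coe_evalRingHom] at h
      rw [h, hUe z]
    have hdu : IsUnit (U z).det := by
      rw [hdet]
      exact (mul_ne_zero hc0 (pow_ne_zero _ hz0)).isUnit
    have hcancel : ∀ A B : Matrix (Fin m) (Fin m) ℂ, U z * A = U z * B → A = B := by
      intro A B h
      have h2 := congrArg (fun M => (U z)⁻¹ * M) h
      simpa [← Matrix.mul_assoc, Matrix.nonsing_inv_mul _ hdu] using h2
    refine hcancel _ _ ?_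
    rw [hadj', Matrix.mul_smul, Matrix.mul_smul, hadj, hPmul, smul_smul, smul_smul]
    ring_nf
  -- polynomial identity
  have key : ∀ i j, C c * X ^ k * Pp i j = X ^ N * Up.adjugate i j := by
    intro i j
    apply eq_of_infinite_eval_eq
    refine circle_infinite_aux.mono ?_
    intro z hz
    have h := key0 z hz
    have h2 := congrFun (congrFun h i) j
    simp only [Matrix.smul_apply, Matrix.map_apply, smul_eq_mul] at h2
    simp only [Set.mem_setOf_eq, eval_mul, eval_C, eval_pow, eval_X]
    exact h2
  have hcoeff : ∀ i j : Fin m, c * (starRingEnd ℂ ((ρ N) j i)) = 0 := by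
    intro i j
    have h := congrArg (fun p => p.coeff k) (key i j)
    beta_reduce at h
    have hL : (C c * X ^ k * Pp i j).coeff k = c * (Pp i j).coeff 0 := by
      rw [mul_assoc, coeff_C_mul]
      have := coeff_X_pow_mul (Pp i j) k 0
      rw [zero_add] at this
      rw [this]
    have hR : (X ^ N * Up.adjugate i j).coeff k = 0 :=
      Polynomial.X_pow_dvd_iff.mp ⟨Up.adjugate i j, rfl⟩ k hk
    have hP0 : (Pp i j).coeff 0 = starRingEnd ℂ ((ρ N) j i) := by
      simp only [hPp, Matrix.of_apply, finset_sum_coeff, coeff_C_mul, coeff_X_pow]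
      rw [Finset.sum_eq_single N]
      · simp
      · intro n hn hne
        rw [Finset.mem_range] at hn
        have : n < N := lt_of_le_of_ne (Nat.lt_succ_iff.mp hn) hne
        have : N - n ≠ 0 := Nat.sub_ne_zero_of_lt this
        simp [Ne.symm this]
      · intro h; exact absurd (Finset.self_mem_range_succ N) h
    rw [hL, hR, hP0] at h
    exact h
  apply hρ
  ext i j
  have := hcoeff j i
  have h2 : starRingEnd ℂ ((ρ N) i j) = 0 := by
    rcases mul_eq_zero.mp this with h | h
    · exact absurd h hc0
    · exact h
  simpa using congrArg (starRingEnd ℂ) h2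
end

section
/- Let S be an m×m Hermitian nonnegative definite matrix of rank k whose upper-left k×k block S_00 is positive definite, and write S_00 = A A* for an invertible k×k matrix A. Define the m×k matrix S_0 with blocks A (top) and S_10 A^{-*} (bottom), where S_10 is the lower-left block of S and A^{-*} = (A*)^{-1}. Then S = S_0 S_0*. -/
open Matrix ComplexOrder

/-- If `S = [[S₀₀, S₀₁], [S₁₀, S₁₁]]` is Hermitian nonnegative definite of rank `k`, with
`S₀₀` positive definite of size `k × k` and `S₀₀ = A A*` for an invertible `A`, then the
`m × k` matrix `S₀` with blocks `A` and `S₁₀ (A*)⁻¹` satisfies `S = S₀ S₀*`. -/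
theorem stmt12 {k l : ℕ}
    (S00 : Matrix (Fin k) (Fin k) ℂ) (S01 : Matrix (Fin k) (Fin l) ℂ)
    (S10 : Matrix (Fin l) (Fin k) ℂ) (S11 : Matrix (Fin l) (Fin l) ℂ)
    (A : Matrix (Fin k) (Fin k) ℂ)
    (hS : (Matrix.fromBlocks S00 S01 S10 S11).PosSemidef)
    (hrank : (Matrix.fromBlocks S00 S01 S10 S11).rank = k)
    (hpd : S00.PosDef) (hA : IsUnit A.det) (hfac : S00 = A * Aᴴ) :
    Matrix.fromBlocks S00 S01 S10 S11 =
      (Matrix.of fun i j => Sum.elim (fun i' => A i' j) (fun i' => (S10 * (Aᴴ)⁻¹) i' j) i :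
        Matrix (Fin k ⊕ Fin l) (Fin k) ℂ) *
      (Matrix.of fun i j => Sum.elim (fun i' => A i' j) (fun i' => (S10 * (Aᴴ)⁻¹) i' j) i :
        Matrix (Fin k ⊕ Fin l) (Fin k) ℂ)ᴴ := by
  classical
  set M := Matrix.fromBlocks S00 S01 S10 S11 with hM
  -- basic facts
  have hS00det : IsUnit S00.det := by
    rw [hfac, Matrix.det_mul, Matrix.det_conjTranspose]
    exact hA.mul hA.star
  have hS00unit : IsUnit S00 := (Matrix.isUnit_iff_isUnit_det S00).2 hS00det
  have hAHdet : IsUnit (Aᴴ).det := by rw [Matrix.det_conjTranspose]; exact hA.star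
  obtain ⟨-, hS01H, hS10H, -⟩ := Matrix.isHermitian_fromBlocks_iff.mp hS.isHermitian
  -- kernel facts
  have hker : ∀ x : Fin k ⊕ Fin l → ℂ, M *ᵥ x = 0 →
      S00 *ᵥ (x ∘ Sum.inl) + S01 *ᵥ (x ∘ Sum.inr) = 0 ∧
      S10 *ᵥ (x ∘ Sum.inl) + S11 *ᵥ (x ∘ Sum.inr) = 0 := by
    intro x hx
    rw [← Sum.elim_comp_inl_inr x, Matrix.fromBlocks_mulVec] at hx
    exact ⟨funext fun i => congrFun hx (Sum.inl i), funext fun i => congrFun hx (Sum.inr i)⟩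
  -- the projection onto the second component, restricted to the kernel
  let K := LinearMap.ker M.mulVecLin
  let f : K →ₗ[ℂ] (Fin l → ℂ) :=
    (LinearMap.funLeft ℂ ℂ Sum.inr).comp K.subtype
  have hf_inj : Function.Injective f := by
    rw [← LinearMap.ker_eq_bot]
    rw [Submodule.eq_bot_iff]
    rintro ⟨x, hx⟩ hfx
    have hx' : M *ᵥ x = 0 := hx
    have hx2 : x ∘ Sum.inr = 0 := hfx
    obtain ⟨h1, -⟩ := hker x hx'
    rw [hx2, Matrix.mulVec_zero, add_zero] at h1
    have hx1 : x ∘ Sum.inl = 0 := by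
      have := Matrix.mulVec_injective_iff_isUnit.2 hS00unit
      have h0 : S00 *ᵥ (x ∘ Sum.inl) = S00 *ᵥ 0 := by rw [h1, Matrix.mulVec_zero]
      exact this h0
    ext1
    have hx0 : x = 0 := by
      funext i
      cases i with
      | inl i => exact congrFun hx1 i
      | inr i => exact congrFun hx2 i
    simp [hx0]
  -- dimension count: finrank K = l
  have hdim : Module.finrank ℂ K = l := by
    show Module.finrank ℂ (LinearMap.ker M.mulVecLin) = l
    have h := LinearMap.finrank_range_add_finrank_ker M.mulVecLin
    have hr : Module.finrank ℂ (LinearMap.range M.mulVecLin) = k := hrank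
    have htot : Module.finrank ℂ (Fin k ⊕ Fin l → ℂ) = k + l := by
      simp [Module.finrank_pi]
    rw [hr, htot] at h
    omega
  -- surjectivity of f
  have hf_surj : Function.Surjective f := by
    rw [← LinearMap.range_eq_top]
    apply Submodule.eq_top_of_finrank_eq
    rw [LinearMap.finrank_range_of_inj hf_inj, hdim]
    simp [Module.finrank_pi]
  -- the Schur complement identity
  have key : S11 = S10 * S00⁻¹ * S01 := by
    have hvec : ∀ y : Fin l → ℂ, S11 *ᵥ y = (S10 * S00⁻¹ * S01) *ᵥ y := by
      intro y
      obtain ⟨⟨x, hx⟩, hxy⟩ := hf_surj y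
      have hxy' : x ∘ Sum.inr = y := hxy
      obtain ⟨h1, h2⟩ := hker x hx
      rw [hxy'] at h1 h2
      have hx1 : x ∘ Sum.inl = -(S00⁻¹ *ᵥ (S01 *ᵥ y)) := by
        have h1' : S00 *ᵥ (x ∘ Sum.inl) = -(S01 *ᵥ y) := by
          rw [eq_neg_iff_add_eq_zero]; exact h1
        have := congrArg (fun v => S00⁻¹ *ᵥ v) h1'
        simpa [Matrix.mulVec_mulVec, Matrix.nonsing_inv_mul S00 hS00det,
          Matrix.mulVec_neg] using this
      have h2' : S11 *ᵥ y = -(S10 *ᵥ (x ∘ Sum.inl)) := by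
        rw [eq_neg_iff_add_eq_zero, add_comm]; exact h2
      rw [h2', hx1]
      simp [Matrix.mulVec_neg, Matrix.mulVec_mulVec, Matrix.mul_assoc]
    ext i j
    have := congrFun (hvec (Pi.single j 1)) i
    simpa [Matrix.mulVec_single] using this
  -- now the block computation
  have hform : (Matrix.of fun i j => Sum.elim (fun i' => A i' j)
      (fun i' => (S10 * (Aᴴ)⁻¹) i' j) i : Matrix (Fin k ⊕ Fin l) (Fin k) ℂ) =
      Matrix.fromRows A (S10 * (Aᴴ)⁻¹) := by
    ext (i | i) j <;> rfl
  rw [hform, Matrix.conjTranspose_fromRows_eq_fromCols_conjTranspose,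
    Matrix.fromRows_mul_fromCols]
  have hBH : (S10 * (Aᴴ)⁻¹)ᴴ = A⁻¹ * S01 := by
    rw [Matrix.conjTranspose_mul, ← Matrix.conjTranspose_nonsing_inv,
      Matrix.conjTranspose_conjTranspose, hS10H]
  rw [hM]
  refine Matrix.fromBlocks_inj.2 ⟨hfac, ?_, ?_, ?_⟩
  · rw [hBH, ← Matrix.mul_assoc, Matrix.mul_nonsing_inv A hA, Matrix.one_mul]
  · rw [Matrix.mul_assoc, Matrix.nonsing_inv_mul (Aᴴ) hAHdet, Matrix.mul_one]
  · rw [hBH, key, hfac, Matrix.mul_inv_rev]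
    simp only [Matrix.mul_assoc]
end

section
/- Let f be an m×k rational matrix function and a a point with |a| < 1 such that rank f(a) < k ≤ m. Then there exists a constant k×k unitary matrix U such that the first column of f(a) U is the zero vector, and consequently g(z) := f(z) U diag((1 - conj(a) z)/(z - a), 1, ..., 1) has no pole at a (its entries, which are rational, are analytic at a whenever f is), and g(z) g*(z) = f(z) f*(z). -/
open Polynomial RatFunc Matrix

noncomputable section
namespace Stmt14

lemma reflect_reflect' {R : Type*} [Semiring R] (N : ℕ) (p : R[X]) :
    (p.reflect N).reflect N = p := by
  ext i; simp [Polynomial.coeff_reflect, Polynomial.revAt_invol]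

lemma natDegree_reflect_le {R : Type*} [Semiring R] {N : ℕ} {p : R[X]} (h : p.natDegree ≤ N) :
    (p.reflect N).natDegree ≤ N := by
  apply Polynomial.natDegree_le_iff_coeff_eq_zero.2
  intro i hi
  rw [Polynomial.coeff_reflect]
  have hiN : ¬ i ≤ N := by omega
  rw [Polynomial.revAt_eq_self_of_lt (by omega)]
  exact Polynomial.coeff_eq_zero_of_natDegree_lt (by omega)

abbrev φc : ℂ →+* RatFunc ℂ := (algebraMap ℂ (RatFunc ℂ)).comp (starRingEnd ℂ)

instance : Invertible (RatFunc.X : RatFunc ℂ) := invertibleOfNonzero RatFunc.X_ne_zero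

lemma eval₂_algebraMap_X (p : ℂ[X]) :
    p.eval₂ (algebraMap ℂ (RatFunc ℂ)) RatFunc.X = algebraMap ℂ[X] (RatFunc ℂ) p := by
  rw [← Polynomial.aeval_def, ← RatFunc.algebraMap_X,
    Polynomial.aeval_algebraMap_apply, Polynomial.aeval_X_left_apply]

lemma eval₂_φc_X (p : ℂ[X]) :
    p.eval₂ φc RatFunc.X = algebraMap ℂ[X] (RatFunc ℂ) (p.map (starRingEnd ℂ)) := by
  rw [← Polynomial.eval₂_map, eval₂_algebraMap_X]

lemma map_conj_ne_zero {p : ℂ[X]} (hp : p ≠ 0) : p.map (starRingEnd ℂ) ≠ 0 := by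
  rwa [Ne, Polynomial.map_eq_zero_iff (RingHom.injective _)]

lemma eval₂_inv_X_ne_zero {q : ℂ[X]} (hq : q ≠ 0) :
    q.eval₂ φc (RatFunc.X : RatFunc ℂ)⁻¹ ≠ 0 := by
  have h := Polynomial.eval₂_reflect_eq_zero_iff φc (RatFunc.X : RatFunc ℂ)
    q.natDegree (q.reflect q.natDegree) (natDegree_reflect_le le_rfl)
  rw [reflect_reflect', invOf_eq_inv] at h
  rw [Ne, h, eval₂_φc_X]
  intro h0
  exact hq (by simpa [Polynomial.map_eq_zero_iff (RingHom.injective (starRingEnd ℂ)),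
    Polynomial.reflect_eq_zero_iff] using h0)

lemma denom_eval₂_inv_X_ne_zero (x : RatFunc ℂ) :
    (Polynomial.eval₂ φc (RatFunc.X : RatFunc ℂ)⁻¹ x.denom) ≠ 0 :=
  eval₂_inv_X_ne_zero (RatFunc.denom_ne_zero x)

/-- The substitution `p(X) ↦ conj(p)(1/X)` as a ring hom. -/
def sH : RatFunc ℂ →+* RatFunc ℂ where
  toFun := RatFunc.eval φc (RatFunc.X : RatFunc ℂ)⁻¹
  map_one' := RatFunc.eval_one _ _
  map_mul' x y := RatFunc.eval_mul (f := φc) (a := (RatFunc.X : RatFunc ℂ)⁻¹)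
    (denom_eval₂_inv_X_ne_zero x) (denom_eval₂_inv_X_ne_zero y)
  map_zero' := RatFunc.eval_zero _ _
  map_add' x y := RatFunc.eval_add (f := φc) (a := (RatFunc.X : RatFunc ℂ)⁻¹)
    (denom_eval₂_inv_X_ne_zero x) (denom_eval₂_inv_X_ne_zero y)

lemma sH_apply (x : RatFunc ℂ) : sH x = RatFunc.eval φc (RatFunc.X : RatFunc ℂ)⁻¹ x := rfl

lemma sH_C (c : ℂ) : sH (RatFunc.C c) = RatFunc.C ((starRingEnd ℂ) c) := by
  rw [sH_apply, RatFunc.eval_C]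
  show algebraMap ℂ (RatFunc ℂ) ((starRingEnd ℂ) c) = _
  rw [IsScalarTower.algebraMap_apply ℂ ℂ[X] (RatFunc ℂ)]
  simp [RatFunc.algebraMap_C, Polynomial.algebraMap_eq]

lemma sH_X : sH RatFunc.X = (RatFunc.X : RatFunc ℂ)⁻¹ := by rw [sH_apply, RatFunc.eval_X]


lemma eval_ne_zero_of_dvd {p q : ℂ[X]} {z : ℂ} (h : p ∣ q) (hq : q.eval z ≠ 0) :
    p.eval z ≠ 0 := by
  obtain ⟨c, rfl⟩ := h
  intro h0; exact hq (by simp [h0])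

lemma denom_eval_ne_zero_of_rep {r : RatFunc ℂ} {p q : ℂ[X]} {z : ℂ}
    (hrep : r = algebraMap ℂ[X] (RatFunc ℂ) p / algebraMap ℂ[X] (RatFunc ℂ) q)
    (hq : q.eval z ≠ 0) : r.denom.eval z ≠ 0 := by
  have hq0 : q ≠ 0 := by rintro rfl; simp at hq
  exact eval_ne_zero_of_dvd ((RatFunc.denom_dvd hq0).2 ⟨p, hrep⟩) hq

lemma eval_of_rep {r : RatFunc ℂ} {p q : ℂ[X]} {z : ℂ}
    (hrep : r = algebraMap ℂ[X] (RatFunc ℂ) p / algebraMap ℂ[X] (RatFunc ℂ) q)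
    (hq : q.eval z ≠ 0) :
    RatFunc.eval (RingHom.id ℂ) z r = p.eval z / q.eval z := by
  have hq0 : q ≠ 0 := by rintro rfl; simp at hq
  have hd : (Polynomial.eval₂ (RingHom.id ℂ) z r.denom) ≠ 0 := denom_eval_ne_zero_of_rep hrep hq
  have hmul : r * algebraMap ℂ[X] (RatFunc ℂ) q = algebraMap ℂ[X] (RatFunc ℂ) p := by
    rw [hrep, div_mul_cancel₀]
    exact RatFunc.algebraMap_ne_zero hq0
  have h2 : RatFunc.eval (RingHom.id ℂ) z (r * algebraMap ℂ[X] (RatFunc ℂ) q)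
      = RatFunc.eval (RingHom.id ℂ) z r * q.eval z := by
    rw [RatFunc.eval_mul (f := RingHom.id ℂ) (a := z) hd (by simp [RatFunc.denom_algebraMap])]
    congr 1
    simp [RatFunc.eval_algebraMap]
  rw [hmul] at h2
  rw [RatFunc.eval_algebraMap] at h2
  have h3 : p.eval z = RatFunc.eval (RingHom.id ℂ) z r * q.eval z := by
    rw [← h2]; rfl
  field_simp [h3]
  exact h3.symm

lemma sH_rep (r : RatFunc ℂ) :
    sH r = algebraMap ℂ[X] (RatFunc ℂ)
        ((r.num.map (starRingEnd ℂ)).reflect (max r.num.natDegree r.denom.natDegree))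
      / algebraMap ℂ[X] (RatFunc ℂ)
        ((r.denom.map (starRingEnd ℂ)).reflect (max r.num.natDegree r.denom.natDegree)) := by
  set N := max r.num.natDegree r.denom.natDegree with hN
  have hXN : (RatFunc.X : RatFunc ℂ)^N ≠ 0 := pow_ne_zero _ RatFunc.X_ne_zero
  have key : ∀ p : ℂ[X], p.natDegree ≤ N →
      p.eval₂ φc (RatFunc.X : RatFunc ℂ)⁻¹ * RatFunc.X ^ N
        = algebraMap ℂ[X] (RatFunc ℂ) ((p.map (starRingEnd ℂ)).reflect N) := by
    intro p hp
    have h1 := Polynomial.eval₂_reflect_mul_pow (algebraMap ℂ (RatFunc ℂ))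
      (RatFunc.X : RatFunc ℂ) N ((p.map (starRingEnd ℂ)).reflect N)
      (natDegree_reflect_le (le_trans Polynomial.natDegree_map_le hp))
    rw [reflect_reflect', invOf_eq_inv, eval₂_algebraMap_X,
      Polynomial.eval₂_map] at h1
    exact h1
  have h2 : sH r = r.num.eval₂ φc (RatFunc.X : RatFunc ℂ)⁻¹
      / r.denom.eval₂ φc (RatFunc.X : RatFunc ℂ)⁻¹ := rfl
  rw [h2, ← mul_div_mul_right _ _ hXN, key r.num (le_max_left _ _),
    key r.denom (le_max_right _ _)]

lemma reflect_eval {z : ℂ} (hz : z ≠ 0) (N : ℕ) (p : ℂ[X]) (hp : p.natDegree ≤ N) :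
    ((p.map (starRingEnd ℂ)).reflect N).eval z
      = z ^ N * (starRingEnd ℂ) (p.eval ((starRingEnd ℂ) z)⁻¹) := by
  haveI : Invertible (z⁻¹) := invertibleOfNonzero (inv_ne_zero hz)
  have h1 := Polynomial.eval₂_reflect_mul_pow (RingHom.id ℂ) (z⁻¹) N (p.map (starRingEnd ℂ))
    (le_trans Polynomial.natDegree_map_le hp)
  rw [invOf_eq_inv, inv_inv] at h1
  have h2 : Polynomial.eval₂ (RingHom.id ℂ) z⁻¹ (p.map (starRingEnd ℂ))
      = (starRingEnd ℂ) (p.eval ((starRingEnd ℂ) z)⁻¹) := by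
    rw [Polynomial.eval₂_map, RingHom.id_comp]
    have h3 : z⁻¹ = (starRingEnd ℂ) (((starRingEnd ℂ) z)⁻¹) := by
      rw [map_inv₀, Complex.conj_conj]
    rw [h3, Polynomial.eval₂_at_apply]
  have h4 : Polynomial.eval₂ (RingHom.id ℂ) z ((p.map (starRingEnd ℂ)).reflect N)
      = ((p.map (starRingEnd ℂ)).reflect N).eval z := rfl
  rw [h2, h4] at h1
  rw [← h1, mul_comm, mul_assoc, ← mul_pow, inv_mul_cancel₀ hz, one_pow, mul_one]

lemma sH_eval {r : RatFunc ℂ} {z : ℂ} (hz : z ≠ 0)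
    (hw : r.denom.eval ((starRingEnd ℂ) z)⁻¹ ≠ 0) :
    (sH r).denom.eval z ≠ 0 ∧
    RatFunc.eval (RingHom.id ℂ) z (sH r)
      = (starRingEnd ℂ) (RatFunc.eval (RingHom.id ℂ) ((starRingEnd ℂ) z)⁻¹ r) := by
  set N := max r.num.natDegree r.denom.natDegree with hN
  have hB : ((r.denom.map (starRingEnd ℂ)).reflect N).eval z ≠ 0 := by
    rw [reflect_eval hz N _ (le_max_right _ _)]
    exact mul_ne_zero (pow_ne_zero _ hz) (by simpa using hw)
  refine ⟨denom_eval_ne_zero_of_rep (sH_rep r) hB, ?_⟩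
  rw [eval_of_rep (sH_rep r) hB, reflect_eval hz N _ (le_max_left _ _),
      reflect_eval hz N _ (le_max_right _ _),
      mul_div_mul_left _ _ (pow_ne_zero _ hz), ← map_div₀]
  rfl

lemma X_sub_C_ne_zero' (a : ℂ) : (RatFunc.X - RatFunc.C a : RatFunc ℂ) ≠ 0 := by
  rw [← RatFunc.algebraMap_X, ← RatFunc.algebraMap_C, ← _root_.map_sub]
  exact RatFunc.algebraMap_ne_zero (Polynomial.X_sub_C_ne_zero a)

lemma one_sub_C_mul_X_ne_zero (a : ℂ) : (1 - RatFunc.C a * RatFunc.X : RatFunc ℂ) ≠ 0 := by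
  rw [← RatFunc.algebraMap_X, ← RatFunc.algebraMap_C, ← _root_.map_one (algebraMap ℂ[X] (RatFunc ℂ)),
    ← _root_.map_mul, ← _root_.map_sub]
  apply RatFunc.algebraMap_ne_zero
  intro h; have := congrArg (Polynomial.eval 0) h; simp at this

lemma d0_mul_sH_d0 (a : ℂ) :
    ((1 - RatFunc.C ((starRingEnd ℂ) a) * RatFunc.X) / (RatFunc.X - RatFunc.C a)) *
      sH ((1 - RatFunc.C ((starRingEnd ℂ) a) * RatFunc.X) / (RatFunc.X - RatFunc.C a)) = 1 := by
  have h1 : sH ((1 - RatFunc.C ((starRingEnd ℂ) a) * RatFunc.X) / (RatFunc.X - RatFunc.C a))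
      = (1 - RatFunc.C a * (RatFunc.X : RatFunc ℂ)⁻¹)
        / ((RatFunc.X : RatFunc ℂ)⁻¹ - RatFunc.C ((starRingEnd ℂ) a)) := by
    rw [map_div₀, _root_.map_sub, _root_.map_sub, _root_.map_mul, _root_.map_one, sH_C, sH_X, sH_C, Complex.conj_conj]
  rw [h1]
  have hX := RatFunc.X_ne_zero (K := ℂ)
  have h2 : ((RatFunc.X : RatFunc ℂ)⁻¹ - RatFunc.C ((starRingEnd ℂ) a))
      = (RatFunc.X : RatFunc ℂ)⁻¹ * (1 - RatFunc.C ((starRingEnd ℂ) a) * RatFunc.X) := by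
    field_simp
  have h3 : (1 - RatFunc.C a * (RatFunc.X : RatFunc ℂ)⁻¹)
      = (RatFunc.X : RatFunc ℂ)⁻¹ * (RatFunc.X - RatFunc.C a) := by
    field_simp
  rw [h2, h3]
  have h4 := X_sub_C_ne_zero' a
  have h5 := one_sub_C_mul_X_ne_zero ((starRingEnd ℂ) a)
  have hXi : ((RatFunc.X : RatFunc ℂ))⁻¹ ≠ 0 := inv_ne_zero hX
  rw [div_mul_div_comm, div_eq_one_iff_eq (by exact mul_ne_zero h4 (mul_ne_zero hXi h5))]
  ring

lemma denom_sum_dvd {ι : Type*} (s : Finset ι) (r : ι → RatFunc ℂ) :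
    (∑ i ∈ s, r i).denom ∣ ∏ i ∈ s, (r i).denom := by
  classical
  induction s using Finset.cons_induction with
  | empty => simp
  | cons a s ha ih =>
    rw [Finset.sum_cons, Finset.prod_cons]
    exact (RatFunc.denom_add_dvd _ _).trans (mul_dvd_mul_left _ ih)

lemma eval_sum {ι : Type*} (s : Finset ι) (r : ι → RatFunc ℂ) (z : ℂ)
    (h : ∀ i ∈ s, ((r i).denom).eval z ≠ 0) :
    RatFunc.eval (RingHom.id ℂ) z (∑ i ∈ s, r i)
      = ∑ i ∈ s, RatFunc.eval (RingHom.id ℂ) z (r i) := by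
  classical
  induction s using Finset.cons_induction with
  | empty => simp
  | cons a s ha ih =>
    rw [Finset.sum_cons, Finset.sum_cons, ← ih (fun i hi => h i (Finset.mem_cons_of_mem hi))]
    apply RatFunc.eval_add (f := RingHom.id ℂ) (a := z)
    · exact h a (Finset.mem_cons_self _ _)
    · exact eval_ne_zero_of_dvd (denom_sum_dvd s r) (by
        rw [Polynomial.eval_prod]
        exact Finset.prod_ne_zero_iff.2 fun i hi => h i (Finset.mem_cons_of_mem hi))

lemma denom_sum_eval_ne_zero {ι : Type*} {s : Finset ι} {r : ι → RatFunc ℂ} {z : ℂ}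
    (h : ∀ i ∈ s, ((r i).denom).eval z ≠ 0) :
    ((∑ i ∈ s, r i).denom).eval z ≠ 0 :=
  eval_ne_zero_of_dvd (denom_sum_dvd s r) (by
    rw [Polynomial.eval_prod]
    exact Finset.prod_ne_zero_iff.2 h)

lemma denom_mul_eval_ne_zero {x y : RatFunc ℂ} {z : ℂ}
    (hx : x.denom.eval z ≠ 0) (hy : y.denom.eval z ≠ 0) :
    ((x * y).denom).eval z ≠ 0 :=
  eval_ne_zero_of_dvd (RatFunc.denom_mul_dvd x y) (by rw [Polynomial.eval_mul]; exact mul_ne_zero hx hy)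

lemma eval_mul' {x y : RatFunc ℂ} {z : ℂ} (hx : x.denom.eval z ≠ 0) (hy : y.denom.eval z ≠ 0) :
    RatFunc.eval (RingHom.id ℂ) z (x * y)
      = RatFunc.eval (RingHom.id ℂ) z x * RatFunc.eval (RingHom.id ℂ) z y :=
  RatFunc.eval_mul (f := RingHom.id ℂ) (a := z) hx hy


lemma exists_unitary {m k : ℕ} (M : Matrix (Fin m) (Fin k) ℂ) (hk : 0 < k)
    (hrank : M.rank < k) :
    ∃ U : Matrix (Fin k) (Fin k) ℂ, U * Uᴴ = 1 ∧
      ∀ i, (M * U) i ⟨0, hk⟩ = 0 := by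
  classical
  -- find a nonzero kernel vector
  have hsum := M.mulVecLin.finrank_range_add_finrank_ker
  have hpi : Module.finrank ℂ (Fin k → ℂ) = k := by simp
  have hker : LinearMap.ker M.mulVecLin ≠ ⊥ := by
    intro hbot
    rw [hbot] at hsum
    rw [hpi, finrank_bot, add_zero] at hsum
    exact absurd hsum (by have : M.rank < k := hrank; rw [Matrix.rank] at this; omega)
  obtain ⟨v, hvker, hv0⟩ := Submodule.ne_bot_iff _ |>.1 hker
  have hMv : M.mulVec v = 0 := hvker
  -- normalize
  set x : EuclideanSpace ℂ (Fin k) := (WithLp.equiv 2 _).symm v with hx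
  have hx0 : x ≠ 0 := by
    intro h; apply hv0
    funext i; exact congrFun (congrArg (WithLp.equiv 2 _) h) i
  set w : EuclideanSpace ℂ (Fin k) := ‖x‖⁻¹ • x with hw
  have hnw : ‖w‖ = 1 := norm_smul_inv_norm hx0
  set j0 : Fin k := ⟨0, hk⟩
  have hortho : Orthonormal ℂ (Set.restrict ({j0} : Set (Fin k)) (fun _ => w)) := by
    constructor
    · intro i; exact hnw
    · intro i j hij
      exact absurd (Subtype.ext (by
        have hi := i.2; have hj := j.2
        simp only [Set.mem_singleton_iff] at hi hj
        rw [hi, hj])) hij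
  obtain ⟨b, hb⟩ := hortho.exists_orthonormalBasis_extension_of_card_eq (by simp)
  have hbj0 : b j0 = w := hb j0 rfl
  refine ⟨Matrix.of fun i j => b j i, ?_, ?_⟩
  · rw [mul_eq_one_comm]
    ext j j'
    rw [Matrix.mul_apply, Matrix.one_apply]
    have := orthonormal_iff_ite.1 b.orthonormal j j'
    rw [PiLp.inner_apply] at this
    simp only [RCLike.inner_apply] at this
    simpa [Matrix.conjTranspose_apply, Matrix.of_apply, mul_comm] using this
  · intro i
    rw [Matrix.mul_apply]
    have : ∀ l, (Matrix.of fun i j => b j i) l j0 = (‖x‖⁻¹ : ℂ) * v l := by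
      intro l
      simp only [Matrix.of_apply, hbj0, hw]
      rw [PiLp.smul_apply]
      simp [hx, Complex.real_smul]
    simp only [this]
    have : ∑ l, M i l * ((‖x‖⁻¹ : ℂ) * v l) = (‖x‖⁻¹ : ℂ) * ∑ l, M i l * v l := by
      rw [Finset.mul_sum]; congr 1; funext l; ring
    rw [this]
    have h0 : ∑ l, M i l * v l = 0 := congrFun hMv i
    rw [h0, mul_zero]


end Stmt14
end

open Matrix

/-- If `f` is an `m × k` rational matrix function with `rank f(a) < k ≤ m` for some `|a| < 1`,
then there is a constant unitary `U` such that the first column of `f(a) U` vanishes, and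
`g(z) = f(z) U diag((1 - ā z)/(z - a), 1, …, 1)` has no pole at `a` and satisfies
`g g* = f f*`. -/
theorem stmt14 {m k : ℕ} (hkm : k ≤ m) (f : Matrix (Fin m) (Fin k) (RatFunc ℂ))
    (a : ℂ) (ha : ‖a‖ < 1)
    (hdef : ∀ i j, Polynomial.eval a (f i j).denom ≠ 0)
    (hrank : (Matrix.of fun i j => (f i j).eval (RingHom.id ℂ) a).rank < k) :
    ∃ U : Matrix (Fin k) (Fin k) ℂ, U * Uᴴ = 1 ∧
      (∀ i : Fin m, ∀ j : Fin k, (j : ℕ) = 0 →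
        ((Matrix.of fun i' j' => (f i' j').eval (RingHom.id ℂ) a) * U) i j = 0) ∧
      ∀ g : Matrix (Fin m) (Fin k) (RatFunc ℂ),
        g = f * (Matrix.of fun i j => RatFunc.C (U i j)) *
          Matrix.diagonal (fun j : Fin k => if (j : ℕ) = 0 then
            (1 - RatFunc.C ((starRingEnd ℂ) a) * RatFunc.X) / (RatFunc.X - RatFunc.C a)
            else 1) →
        (∀ i j, Polynomial.eval a (g i j).denom ≠ 0) ∧
        (∀ z : ℂ, z ≠ 0 →
          (∀ i j, Polynomial.eval z (f i j).denom ≠ 0) →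
          (∀ i j, Polynomial.eval ((starRingEnd ℂ) z)⁻¹ (f i j).denom ≠ 0) →
          (∀ i j, Polynomial.eval z (g i j).denom ≠ 0) →
          (∀ i j, Polynomial.eval ((starRingEnd ℂ) z)⁻¹ (g i j).denom ≠ 0) →
          (Matrix.of fun i j => (g i j).eval (RingHom.id ℂ) z) *
            (Matrix.of fun i j => (g i j).eval (RingHom.id ℂ) ((starRingEnd ℂ) z)⁻¹)ᴴ =
          (Matrix.of fun i j => (f i j).eval (RingHom.id ℂ) z) *
            (Matrix.of fun i j => (f i j).eval (RingHom.id ℂ) ((starRingEnd ℂ) z)⁻¹)ᴴ) := by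
  classical
  have hk : 0 < k := lt_of_le_of_lt (Nat.zero_le _) hrank
  obtain ⟨U, hU, hcol⟩ := Stmt14.exists_unitary
    (Matrix.of fun i j => (f i j).eval (RingHom.id ℂ) a) hk hrank
  refine ⟨U, hU, fun i j hj => ?_, fun g hg => ?_⟩
  · have hj' : j = ⟨0, hk⟩ := Fin.ext hj
    rw [hj']; exact hcol i
  -- notation
  set u : RatFunc ℂ :=
    (1 - RatFunc.C ((starRingEnd ℂ) a) * RatFunc.X) / (RatFunc.X - RatFunc.C a) with hu
  set h : Fin m → Fin k → RatFunc ℂ := fun i j => ∑ l, f i l * RatFunc.C (U l j) with hh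
  have hgij : ∀ i j, g i j = h i j * (if (j : ℕ) = 0 then u else 1) := by
    intro i j
    rw [hg, Matrix.mul_diagonal, Matrix.mul_apply]
    simp only [Matrix.of_apply, hh]
  have hden_h : ∀ z : ℂ, (∀ i l, Polynomial.eval z (f i l).denom ≠ 0) →
      ∀ i j, Polynomial.eval z (h i j).denom ≠ 0 := by
    intro z hz i j
    apply Stmt14.denom_sum_eval_ne_zero
    intro l _
    exact Stmt14.denom_mul_eval_ne_zero (hz i l) (by rw [RatFunc.denom_C]; simp)
  have heval_h : ∀ z : ℂ, (∀ i l, Polynomial.eval z (f i l).denom ≠ 0) →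
      ∀ i j, RatFunc.eval (RingHom.id ℂ) z (h i j)
        = ∑ l, RatFunc.eval (RingHom.id ℂ) z (f i l) * U l j := by
    intro z hz i j
    rw [hh]
    rw [Stmt14.eval_sum _ _ z (fun l _ =>
      Stmt14.denom_mul_eval_ne_zero (hz i l) (by rw [RatFunc.denom_C]; simp))]
    apply Finset.sum_congr rfl
    intro l _
    rw [Stmt14.eval_mul' (hz i l) (by rw [RatFunc.denom_C]; simp), RatFunc.eval_C]
    rfl
  constructor
  · -- no pole at a
    intro i j
    by_cases hj : (j : ℕ) = 0
    · -- first column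
      have hj' : j = ⟨0, hk⟩ := Fin.ext hj
      have hh0 : RatFunc.eval (RingHom.id ℂ) a (h i j) = 0 := by
        rw [heval_h a (fun i l => hdef i l) i j]
        have := hcol i
        rw [Matrix.mul_apply] at this
        rw [hj']
        simpa [Matrix.of_apply] using this
      have hdh : Polynomial.eval a (h i j).denom ≠ 0 := hden_h a (fun i l => hdef i l) i j
      have hnum : Polynomial.eval a (h i j).num = 0 := by
        have : RatFunc.eval (RingHom.id ℂ) a (h i j)
            = Polynomial.eval a (h i j).num / Polynomial.eval a (h i j).denom := rfl
        rw [this] at hh0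
        exact (div_eq_zero_iff.1 hh0).resolve_right hdh
      obtain ⟨q, hq⟩ := (Polynomial.dvd_iff_isRoot (p := (h i j).num) (a := a)).2 hnum
      have hrep : g i j = algebraMap ℂ[X] (RatFunc ℂ)
            (q * (1 - Polynomial.C ((starRingEnd ℂ) a) * Polynomial.X))
          / algebraMap ℂ[X] (RatFunc ℂ) (h i j).denom := by
        rw [hgij i j, if_pos hj, hu]
        conv_lhs => rw [← RatFunc.num_div_denom (h i j)]
        rw [hq]
        rw [← RatFunc.algebraMap_X, ← RatFunc.algebraMap_C (a := a),
          ← RatFunc.algebraMap_C (a := (starRingEnd ℂ) a),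
          ← _root_.map_one (algebraMap ℂ[X] (RatFunc ℂ)), ← _root_.map_mul, ← _root_.map_sub, ← _root_.map_sub]
        rw [div_mul_div_comm, ← _root_.map_mul, ← _root_.map_mul]
        rw [div_eq_div_iff (RatFunc.algebraMap_ne_zero (mul_ne_zero (RatFunc.denom_ne_zero _)
          (Polynomial.X_sub_C_ne_zero a)))
          (RatFunc.algebraMap_ne_zero (RatFunc.denom_ne_zero _)), ← _root_.map_mul, ← _root_.map_mul]
        exact congrArg _ (by ring)
      exact Stmt14.denom_eval_ne_zero_of_rep hrep hdh
    · have : g i j = h i j := by rw [hgij i j, if_neg hj, mul_one]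
      rw [this]
      exact hden_h a (fun i l => hdef i l) i j
  · -- the symmetry identity
    intro z hz hfz hfw hgz hgw
    set w : ℂ := ((starRingEnd ℂ) z)⁻¹ with hwdef
    -- RatFunc-level identity
    have hid : ∀ i i', (∑ j, g i j * Stmt14.sH (g i' j)) = ∑ j, f i j * Stmt14.sH (f i' j) := by
      intro i i'
      have hUe : ∀ l l', (∑ j, U l j * (starRingEnd ℂ) (U l' j))
          = if l = l' then (1 : ℂ) else 0 := by
        intro l l'
        have h1 := congrFun (congrFun hU l) l'
        rw [Matrix.mul_apply] at h1
        simpa [Matrix.conjTranspose_apply, Matrix.one_apply, Complex.star_def] using h1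
      calc ∑ j, g i j * Stmt14.sH (g i' j)
          = ∑ j, h i j * Stmt14.sH (h i' j) := by
            apply Finset.sum_congr rfl
            intro j _
            rw [hgij i j, hgij i' j, _root_.map_mul]
            have hd : (if (j : ℕ) = 0 then u else 1)
                * Stmt14.sH (if (j : ℕ) = 0 then u else 1) = 1 := by
              by_cases hj : (j : ℕ) = 0
              · rw [if_pos hj, hu]; exact Stmt14.d0_mul_sH_d0 a
              · rw [if_neg hj, _root_.map_one, mul_one]
            calc (h i j * (if (j : ℕ) = 0 then u else 1))
                  * (Stmt14.sH (h i' j) * Stmt14.sH (if (j : ℕ) = 0 then u else 1))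
                = (h i j * Stmt14.sH (h i' j)) * ((if (j : ℕ) = 0 then u else 1)
                  * Stmt14.sH (if (j : ℕ) = 0 then u else 1)) := by ring
              _ = h i j * Stmt14.sH (h i' j) := by rw [hd, mul_one]
        _ = ∑ j, ∑ l, ∑ l', (f i l * Stmt14.sH (f i' l'))
              * RatFunc.C (U l j * (starRingEnd ℂ) (U l' j)) := by
            apply Finset.sum_congr rfl
            intro j _
            rw [hh]
            simp only []
            rw [_root_.map_sum, Finset.sum_mul_sum]
            apply Finset.sum_congr rfl
            intro l _
            apply Finset.sum_congr rfl
            intro l' _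
            rw [_root_.map_mul, Stmt14.sH_C, _root_.map_mul]
            ring
        _ = ∑ l, ∑ l', (f i l * Stmt14.sH (f i' l'))
              * RatFunc.C (∑ j, U l j * (starRingEnd ℂ) (U l' j)) := by
            rw [Finset.sum_comm]
            apply Finset.sum_congr rfl
            intro l _
            rw [Finset.sum_comm]
            apply Finset.sum_congr rfl
            intro l' _
            rw [_root_.map_sum, Finset.mul_sum]
        _ = ∑ l, f i l * Stmt14.sH (f i' l) := by
            apply Finset.sum_congr rfl
            intro l _
            simp only [hUe, apply_ite RatFunc.C, _root_.map_one, _root_.map_zero, mul_ite, mul_one, mul_zero]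
            simp
    -- evaluate
    ext i i'
    rw [Matrix.mul_apply, Matrix.mul_apply]
    simp only [Matrix.of_apply, Matrix.conjTranspose_apply, Complex.star_def]
    have e1 : RatFunc.eval (RingHom.id ℂ) z (∑ j, g i j * Stmt14.sH (g i' j))
        = ∑ j, RatFunc.eval (RingHom.id ℂ) z (g i j)
            * (starRingEnd ℂ) (RatFunc.eval (RingHom.id ℂ) w (g i' j)) := by
      rw [Stmt14.eval_sum _ _ z (fun j _ =>
        Stmt14.denom_mul_eval_ne_zero (hgz i j) (Stmt14.sH_eval hz (hgw i' j)).1)]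
      apply Finset.sum_congr rfl
      intro j _
      rw [Stmt14.eval_mul' (hgz i j) (Stmt14.sH_eval hz (hgw i' j)).1,
        (Stmt14.sH_eval hz (hgw i' j)).2]
    have e2 : RatFunc.eval (RingHom.id ℂ) z (∑ j, f i j * Stmt14.sH (f i' j))
        = ∑ j, RatFunc.eval (RingHom.id ℂ) z (f i j)
            * (starRingEnd ℂ) (RatFunc.eval (RingHom.id ℂ) w (f i' j)) := by
      rw [Stmt14.eval_sum _ _ z (fun j _ =>
        Stmt14.denom_mul_eval_ne_zero (hfz i j) (Stmt14.sH_eval hz (hfw i' j)).1)]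
      apply Finset.sum_congr rfl
      intro j _
      rw [Stmt14.eval_mul' (hfz i j) (Stmt14.sH_eval hz (hfw i' j)).1,
        (Stmt14.sH_eval hz (hfw i' j)).2]
    rw [← e1, ← e2, hid i i']
end

section
/- Let S(z) = sum_{n=-N}^N C_n z^n be an m×m Laurent matrix polynomial, nonnegative definite of rank k ≤ m for almost all z on the unit circle, and suppose S(z) = S^+(z) S^-(z) where S^+ is an m×k rational matrix function analytic and of full rank k in the open unit disk and S^- = (S^+)*. Then S^+ is a matrix polynomial of degree at most N. -/
open Matrix ComplexOrder MeasureTheory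

open Filter Topology Polynomial

private lemma aux_evalRat (q : RatFunc ℂ) (z : ℂ) :
    q.eval (RingHom.id ℂ) z = q.num.eval z / q.denom.eval z := rfl

private lemma aux_tendsto_norm_eval_atTop {α : Type*} {l : Filter α} (q : RatFunc ℂ) {z0 : ℂ}
    (hden : q.denom.eval z0 = 0) {w : α → ℂ} (hw : Tendsto w l (𝓝 z0))
    (hne : ∀ᶠ t in l, q.denom.eval (w t) ≠ 0) :
    Tendsto (fun t => ‖q.eval (RingHom.id ℂ) (w t)‖) l atTop := by
  have hnum : q.num.eval z0 ≠ 0 := by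
    obtain ⟨a, b, hab⟩ := q.isCoprime_num_denom
    intro h0
    have := congrArg (Polynomial.eval z0) hab
    simp [hden, h0] at this
  have hnumt : Tendsto (fun t => ‖q.num.eval (w t)‖) l (𝓝 ‖q.num.eval z0‖) :=
    ((q.num.continuous_aeval.continuousAt).tendsto.comp hw).norm
  have hdent : Tendsto (fun t => ‖q.denom.eval (w t)‖) l (𝓝 0) := by
    have := ((q.denom.continuous_aeval.continuousAt).tendsto.comp hw).norm
    simpa [hden] using this
  -- ratio ‖denom‖/‖num‖ → 0 within Ioi 0
  have hratio : Tendsto (fun t => ‖q.denom.eval (w t)‖ / ‖q.num.eval (w t)‖) l (𝓝[>] 0) := by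
    rw [tendsto_nhdsWithin_iff]
    constructor
    · have h := hdent.div hnumt (by simpa using hnum); rwa [zero_div] at h
    · have hnum' : ∀ᶠ t in l, q.num.eval (w t) ≠ 0 := by
        have : ∀ᶠ t in l, ‖q.num.eval (w t)‖ ≠ 0 :=
          hnumt.eventually_ne (by simpa using hnum) |>.mono (fun t ht => ht)
        exact this.mono fun t ht => by simpa using ht
      filter_upwards [hne, hnum'] with t h1 h2
      exact Set.mem_Ioi.2 (div_pos (norm_pos_iff.2 h1) (norm_pos_iff.2 h2))
  have := hratio.inv_tendsto_nhdsGT_zero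
  refine this.congr fun t => ?_
  rw [Pi.inv_apply, aux_evalRat, norm_div, inv_div]

-- eventual non-vanishing of a polynomial along a filter converging to c, avoiding c

private lemma aux_eventually_eval_ne {α : Type*} {l : Filter α} (d : Polynomial ℂ) (hd : d ≠ 0) {c : ℂ}
    {w : α → ℂ} (hw : Tendsto w l (𝓝 c)) (hc : ∀ᶠ t in l, w t ≠ c) :
    ∀ᶠ t in l, d.eval (w t) ≠ 0 := by
  have hroots : {z : ℂ | d.IsRoot z}.Finite := Polynomial.finite_setOf_isRoot hd
  have : ∀ᶠ t in l, ∀ z ∈ {z : ℂ | d.IsRoot z}, w t ≠ z := by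
    rw [hroots.eventually_all]
    intro z hz
    rcases eq_or_ne z c with rfl | hzc
    · exact hc
    · exact hw.eventually_ne hzc.symm
  exact this.mono fun t ht h => ht _ h rfl

private lemma aux_isUnit_det_of_rank_eq {k : ℕ} (A : Matrix (Fin k) (Fin k) ℂ) (h : A.rank = k) :
    IsUnit A.det := by
  rw [← Matrix.isUnit_iff_isUnit_det]
  rw [← Matrix.mulVec_surjective_iff_isUnit]
  have hr : LinearMap.range A.mulVecLin = ⊤ := by
    apply Submodule.eq_top_of_finrank_eq
    rw [← Matrix.rank, h]
    simp [Module.finrank_pi]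
  intro v
  have := hr ▸ Submodule.mem_top (x := v) (R := ℂ)
  obtain ⟨x, hx⟩ := (LinearMap.mem_range).1 this
  exact ⟨x, hx⟩

-- tendsto of matrix-valued functions from entrywise tendsto

private lemma aux_tendsto_matrix {α l' n' : Type*} [Fintype l'] [Fintype n'] {l : Filter α}
    {M : α → Matrix l' n' ℂ} {L : Matrix l' n' ℂ}
    (h : ∀ i j, Tendsto (fun t => M t i j) l (𝓝 (L i j))) :
    Tendsto M l (𝓝 L) := by
  refine tendsto_pi_nhds.2 ?_
  intro i
  refine tendsto_pi_nhds.2 ?_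
  exact h i

private lemma aux_tendsto_entry {α : Type*} {l' n' : Type*} [Fintype l'] [Fintype n']
    {l : Filter α} {M : α → Matrix l' n' ℂ} {L : Matrix l' n' ℂ}
    (h : Tendsto M l (𝓝 L)) (i : l') (j : n') :
    Tendsto (fun t => M t i j) l (𝓝 (L i j)) := by
  have : Continuous fun A : Matrix l' n' ℂ => A i j :=
    (continuous_apply j).comp (continuous_apply i)
  exact (this.tendsto L).comp h


private lemma aux_tendsto_mul {α : Type*} {a b c : Type*} [Fintype a] [Fintype b] [Fintype c]
    {l : Filter α} {M : α → Matrix a b ℂ} {W : α → Matrix b c ℂ}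
    {L1 : Matrix a b ℂ} {L2 : Matrix b c ℂ}
    (hM : Tendsto M l (𝓝 L1)) (hW : Tendsto W l (𝓝 L2)) :
    Tendsto (fun t => M t * W t) l (𝓝 (L1 * L2)) := by
  apply aux_tendsto_matrix
  intro i j
  simp only [Matrix.mul_apply]
  exact tendsto_finset_sum _ fun u _ =>
    (aux_tendsto_entry hM i u).mul (aux_tendsto_entry hW u j)


-- Tendsto of the evaluated matrix P at a point in the disc

private lemma aux_tendsto_Pev {α m' k' : Type*} [Fintype m'] [Fintype k'] {l : Filter α}
    (P : Matrix m' k' (RatFunc ℂ)) {w0 : ℂ}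
    (hden : ∀ i j, Polynomial.eval w0 (P i j).denom ≠ 0)
    {w : α → ℂ} (hw : Tendsto w l (𝓝 w0)) :
    Tendsto (fun t => (Matrix.of fun i j => (P i j).eval (RingHom.id ℂ) (w t)))
      l (𝓝 (Matrix.of fun i j => (P i j).eval (RingHom.id ℂ) w0)) := by
  apply aux_tendsto_matrix
  intro i j
  simp only [Matrix.of_apply, aux_evalRat]
  exact (((P i j).num.continuous_aeval.continuousAt.tendsto).comp hw).div
    (((P i j).denom.continuous_aeval.continuousAt.tendsto).comp hw) (hden i j)

private lemma aux_natDegree_le_of_bound (p : Polynomial ℂ) (N : ℕ) (C x0 : ℝ)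
    (hb : ∀ x : ℝ, x0 ≤ x → ‖p.eval (x : ℂ)‖ ≤ C * x ^ N) : p.natDegree ≤ N := by
  by_contra hd
  push_neg at hd
  have hp0 : p ≠ 0 := by
    intro h
    rw [h] at hd
    simp at hd
  set d := p.natDegree with hdd
  have hd1 : 1 ≤ d := le_trans (Nat.succ_le_succ (Nat.zero_le N)) hd
  set a := ‖p.leadingCoeff‖ with ha_def
  have ha : 0 < a := norm_pos_iff.2 (Polynomial.leadingCoeff_ne_zero.2 hp0)
  set D := ∑ i ∈ Finset.range d, ‖p.coeff i‖ with hD_def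
  have hD0 : 0 ≤ D := Finset.sum_nonneg fun i _ => norm_nonneg _
  have key : ∀ x : ℝ, 1 ≤ x → (a * x - D) * x ^ (d - 1) ≤ ‖p.eval (x : ℂ)‖ := by
    intro x hx
    have hx0 : (0:ℝ) < x := lt_of_lt_of_le one_pos hx
    have heval : p.eval (x : ℂ)
        = (∑ i ∈ Finset.range d, p.coeff i * (x:ℂ) ^ i) + p.coeff d * (x:ℂ) ^ d := by
      rw [Polynomial.eval_eq_sum_range, Finset.sum_range_succ]
    have h1 : ‖p.coeff d * (x:ℂ) ^ d‖ = a * x ^ d := by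
      rw [norm_mul, norm_pow, Complex.norm_real, Real.norm_of_nonneg hx0.le]
      rfl
    have h2 : ‖∑ i ∈ Finset.range d, p.coeff i * (x:ℂ) ^ i‖ ≤ D * x ^ (d - 1) := by
      refine le_trans (norm_sum_le _ _) ?_
      rw [hD_def, Finset.sum_mul]
      refine Finset.sum_le_sum fun i hi => ?_
      rw [norm_mul, norm_pow, Complex.norm_real, Real.norm_of_nonneg hx0.le]
      refine mul_le_mul_of_nonneg_left ?_ (norm_nonneg _)
      exact pow_le_pow_right₀ hx (Nat.le_sub_one_of_lt (Finset.mem_range.1 hi))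
    calc (a * x - D) * x ^ (d - 1)
        = a * x ^ d - D * x ^ (d - 1) := by
          rw [sub_mul]
          congr 1
          rw [mul_assoc, ← pow_succ']
          congr 2
          omega
      _ ≤ ‖p.coeff d * (x:ℂ) ^ d‖ - ‖∑ i ∈ Finset.range d, p.coeff i * (x:ℂ) ^ i‖ := by
          rw [h1]; linarith
      _ ≤ ‖p.eval (x : ℂ)‖ := by
          rw [heval]
          have htri : ‖p.coeff d * (x:ℂ) ^ d‖
              ≤ ‖(∑ i ∈ Finset.range d, p.coeff i * (x:ℂ) ^ i) + p.coeff d * (x:ℂ) ^ d‖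
                + ‖∑ i ∈ Finset.range d, p.coeff i * (x:ℂ) ^ i‖ := by
            have h3 := norm_sub_le ((∑ i ∈ Finset.range d, p.coeff i * (x:ℂ) ^ i)
              + p.coeff d * (x:ℂ) ^ d) (∑ i ∈ Finset.range d, p.coeff i * (x:ℂ) ^ i)
            simp only [add_sub_cancel_left] at h3
            linarith
          linarith
  -- pick a big x
  set x := max (max 1 x0) ((D + C + 1) / a) with hx_def
  have hx1 : (1:ℝ) ≤ x := le_trans (le_max_left 1 x0) (le_max_left _ _)
  have hxx0 : x0 ≤ x := le_trans (le_max_right 1 x0) (le_max_left _ _)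
  have hx0 : (0:ℝ) < x := lt_of_lt_of_le one_pos hx1
  have hax : D + C + 1 ≤ a * x := by
    have : (D + C + 1) / a ≤ x := le_max_right _ _
    calc D + C + 1 = ((D + C + 1) / a) * a := by field_simp
      _ ≤ x * a := mul_le_mul_of_nonneg_right this ha.le
      _ = a * x := mul_comm _ _
  have hCpos : 0 ≤ C := by
    have h := hb x hxx0
    have h2 : (0:ℝ) ≤ C * x ^ N := le_trans (norm_nonneg _) h
    have hxN : (0:ℝ) < x ^ N := pow_pos hx0 N
    exact (mul_nonneg_iff_of_pos_right hxN).1 h2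
  have hkey := key x hx1
  have hxpow : x ^ N ≤ x ^ (d - 1) := pow_le_pow_right₀ hx1 (by omega)
  have hxN : (0:ℝ) < x ^ N := pow_pos hx0 N
  have hxN1 : (1:ℝ) ≤ x ^ N := one_le_pow₀ hx1
  have hstep : (C + 1) * x ^ N ≤ (a * x - D) * x ^ (d - 1) := by
    have h1 : (C + 1) * x ^ N ≤ (C + 1) * x ^ (d - 1) :=
      mul_le_mul_of_nonneg_left hxpow (by linarith)
    have h2 : (C + 1) * x ^ (d - 1) ≤ (a * x - D) * x ^ (d - 1) := by
      refine mul_le_mul_of_nonneg_right ?_ (pow_nonneg hx0.le _)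
      linarith
    linarith
  have hfinal := hb x hxx0
  nlinarith

private lemma aux_circle {m k N : ℕ} (Cf : ℤ → Matrix (Fin m) (Fin m) ℂ)
    (S : ℂ → Matrix (Fin m) (Fin m) ℂ)
    (hS : ∀ z : ℂ, z ≠ 0 → S z = ∑ n ∈ Finset.Icc (-(N : ℤ)) (N : ℤ), z ^ n • Cf n)
    (P : Matrix (Fin m) (Fin k) (RatFunc ℂ))
    (hfac : ∀ z : ℂ, z ≠ 0 →
      (∀ i j, Polynomial.eval z (P i j).denom ≠ 0) →
      (∀ i j, Polynomial.eval ((starRingEnd ℂ) z)⁻¹ (P i j).denom ≠ 0) →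
      S z = (Matrix.of fun i j => (P i j).eval (RingHom.id ℂ) z) *
        (Matrix.of fun i j => (P i j).eval (RingHom.id ℂ) ((starRingEnd ℂ) z)⁻¹)ᴴ)
    (i0 : Fin m) (j0 : Fin k) (z0 : ℂ) (habs : ‖z0‖ = 1)
    (hden : Polynomial.eval z0 (P i0 j0).denom = 0) : False := by
  classical
  have hz0 : z0 ≠ 0 := by
    intro h; rw [h] at habs; simp at habs
  set l : Filter ℝ := 𝓝[>] (0:ℝ) with hl
  set w : ℝ → ℂ := fun θ => z0 * Complex.exp (θ * Complex.I) with hw_def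
  have hw_t : Tendsto w l (𝓝 z0) := by
    have hcont : Continuous w := by
      exact continuous_const.mul ((Complex.continuous_ofReal.mul continuous_const).cexp)
    have := hcont.tendsto 0
    simp only [hw_def] at this ⊢
    simp only [Complex.ofReal_zero, zero_mul, Complex.exp_zero, mul_one] at this
    exact this.mono_left nhdsWithin_le_nhds
  have habs_w : ∀ θ : ℝ, ‖w θ‖ = 1 := by
    intro θ
    simp only [hw_def]
    rw [norm_mul, habs, one_mul, Complex.norm_exp]
    simp
  have hwne0 : ∀ θ : ℝ, w θ ≠ 0 := by
    intro θ h
    have := habs_w θ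
    rw [h] at this; simp at this
  have hwne : ∀ᶠ θ in l, w θ ≠ z0 := by
    have hmem : ∀ᶠ θ in l, θ ∈ Set.Ioo (0:ℝ) 1 := by
      apply Ioo_mem_nhdsGT_of_mem
      exact ⟨le_refl _, one_pos⟩
    refine hmem.mono fun θ hθ h => ?_
    have hexp : Complex.exp (θ * Complex.I) = 1 := by
      have h' : z0 * Complex.exp (θ * Complex.I) = z0 * 1 := by rw [mul_one]; exact h
      exact mul_left_cancel₀ hz0 h'
    rw [Complex.exp_eq_one_iff] at hexp
    obtain ⟨n, hn⟩ := hexp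
    have hn' : (θ:ℂ) * Complex.I = ((n:ℂ) * (2 * (Real.pi:ℂ))) * Complex.I := by
      rw [hn]; ring
    have hθeq : (θ:ℂ) = n * (2 * (Real.pi:ℂ)) := mul_right_cancel₀ Complex.I_ne_zero hn'
    have hθr : θ = n * (2 * Real.pi) := by exact_mod_cast hθeq
    rcases le_or_gt n 0 with hn0 | hn0
    · have : (n:ℝ) * (2 * Real.pi) ≤ 0 :=
        mul_nonpos_of_nonpos_of_nonneg (by exact_mod_cast hn0) (by positivity)
      linarith [hθ.1]
    · have hn1 : (1:ℝ) ≤ (n:ℝ) := by exact_mod_cast hn0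
      have : 2 * Real.pi ≤ (n:ℝ) * (2 * Real.pi) := by
        nlinarith [Real.pi_pos]
      nlinarith [Real.pi_gt_three, hθ.2]
  -- eventually all denominators nonzero at w θ
  have hall : ∀ᶠ θ in l, ∀ i j, Polynomial.eval (w θ) (P i j).denom ≠ 0 := by
    rw [eventually_all]
    intro i
    rw [eventually_all]
    intro j
    exact aux_eventually_eval_ne _ (RatFunc.denom_ne_zero _) hw_t hwne
  -- conj-inverse on the circle
  have hconj : ∀ θ : ℝ, ((starRingEnd ℂ) (w θ))⁻¹ = w θ := by
    intro θ
    have h1 : w θ * (starRingEnd ℂ) (w θ) = 1 := by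
      rw [Complex.mul_conj]
      rw [← Complex.sq_norm, habs_w θ]
      norm_num
    rw [mul_comm] at h1
    exact inv_eq_of_mul_eq_one_right h1
  -- factorization on the circle
  have hfacθ : ∀ᶠ θ in l, S (w θ) i0 i0
      = ((∑ j, Complex.normSq ((P i0 j).eval (RingHom.id ℂ) (w θ)) : ℝ) : ℂ) := by
    filter_upwards [hall] with θ hallθ
    have hall2 : ∀ i j, Polynomial.eval ((starRingEnd ℂ) (w θ))⁻¹ (P i j).denom ≠ 0 := by
      intro i j; rw [hconj θ]; exact hallθ i j
    have h := hfac (w θ) (hwne0 θ) hallθ hall2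
    rw [hconj θ] at h
    have h2 := congrArg (fun M : Matrix (Fin m) (Fin m) ℂ => M i0 i0) h
    simp only [Matrix.mul_apply, Matrix.conjTranspose_apply, Matrix.of_apply] at h2
    rw [h2]
    push_cast
    refine Finset.sum_congr rfl fun j _ => ?_
    rw [← Complex.mul_conj]
    rfl
  -- limit of S entry
  have hSlim : Tendsto (fun θ => S (w θ) i0 i0) l
      (𝓝 (∑ n ∈ Finset.Icc (-(N:ℤ)) (N:ℤ), z0 ^ n * Cf n i0 i0)) := by
    have hform : ∀ θ, S (w θ) i0 i0
        = ∑ n ∈ Finset.Icc (-(N:ℤ)) (N:ℤ), (w θ) ^ n * Cf n i0 i0 := by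
      intro θ
      rw [hS (w θ) (hwne0 θ)]
      simp [Matrix.sum_apply, Matrix.smul_apply, smul_eq_mul]
    simp only [hform]
    apply tendsto_finset_sum
    intro n _
    exact (((continuousAt_zpow₀ z0 n (Or.inl hz0)).tendsto).comp hw_t).mul tendsto_const_nhds
  have hblow := aux_tendsto_norm_eval_atTop (P i0 j0) hden hw_t
    (by filter_upwards [hall] with θ h; exact h i0 j0)
  have hsq : Tendsto (fun θ => ‖(P i0 j0).eval (RingHom.id ℂ) (w θ)‖^2) l atTop := by
    have := hblow.atTop_mul_atTop₀ hblow
    refine this.congr fun θ => ?_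
    rw [pow_two]
  have hub : ∀ᶠ θ in l, ‖(P i0 j0).eval (RingHom.id ℂ) (w θ)‖^2 ≤ ‖S (w θ) i0 i0‖ := by
    filter_upwards [hfacθ] with θ h
    rw [h, Complex.norm_real]
    have hnn : (0:ℝ) ≤ ∑ j, Complex.normSq ((P i0 j).eval (RingHom.id ℂ) (w θ)) :=
      Finset.sum_nonneg fun j _ => Complex.normSq_nonneg _
    rw [Real.norm_of_nonneg hnn]
    have hle : Complex.normSq ((P i0 j0).eval (RingHom.id ℂ) (w θ))
        ≤ ∑ j, Complex.normSq ((P i0 j).eval (RingHom.id ℂ) (w θ)) :=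
      Finset.single_le_sum (f := fun j => Complex.normSq ((P i0 j).eval (RingHom.id ℂ) (w θ)))
        (fun j _ => Complex.normSq_nonneg _) (Finset.mem_univ j0)
    calc ‖(P i0 j0).eval (RingHom.id ℂ) (w θ)‖^2
        = Complex.normSq ((P i0 j0).eval (RingHom.id ℂ) (w θ)) := Complex.sq_norm _
      _ ≤ _ := hle
  have hST := tendsto_atTop_mono' l hub hsq
  exact not_tendsto_atTop_of_tendsto_nhds hSlim.norm hST

private lemma aux_outside {m k N : ℕ} (Cf : ℤ → Matrix (Fin m) (Fin m) ℂ)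
    (S : ℂ → Matrix (Fin m) (Fin m) ℂ)
    (hS : ∀ z : ℂ, z ≠ 0 → S z = ∑ n ∈ Finset.Icc (-(N : ℤ)) (N : ℤ), z ^ n • Cf n)
    (P : Matrix (Fin m) (Fin k) (RatFunc ℂ))
    (hanal : ∀ i j, ∀ z : ℂ, ‖z‖ < 1 → Polynomial.eval z (P i j).denom ≠ 0)
    (hfull : ∀ z : ℂ, ‖z‖ < 1 →
      (Matrix.of fun i j => (P i j).eval (RingHom.id ℂ) z).rank = k)
    (hfac : ∀ z : ℂ, z ≠ 0 →
      (∀ i j, Polynomial.eval z (P i j).denom ≠ 0) →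
      (∀ i j, Polynomial.eval ((starRingEnd ℂ) z)⁻¹ (P i j).denom ≠ 0) →
      S z = (Matrix.of fun i j => (P i j).eval (RingHom.id ℂ) z) *
        (Matrix.of fun i j => (P i j).eval (RingHom.id ℂ) ((starRingEnd ℂ) z)⁻¹)ᴴ)
    (i0 : Fin m) (j0 : Fin k) (z0 : ℂ) (habs : 1 < ‖z0‖)
    (hden : Polynomial.eval z0 (P i0 j0).denom = 0) : False := by
  classical
  have hz0 : z0 ≠ 0 := by
    intro h; rw [h] at habs; simp at habs; linarith
  set w0 : ℂ := ((starRingEnd ℂ) z0)⁻¹ with hw0_def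
  have habs_w0 : ‖w0‖ < 1 := by
    rw [hw0_def, norm_inv, Complex.norm_conj]
    rw [inv_lt_one_iff₀]
    right; exact habs
  have hw0ne : w0 ≠ 0 := by
    simp [hw0_def, hz0]
  have hconjw0 : ((starRingEnd ℂ) w0)⁻¹ = z0 := by
    rw [hw0_def, map_inv₀, Complex.conj_conj, inv_inv]
  set l : Filter ℝ := 𝓝[>] (0:ℝ) with hl
  set zf : ℝ → ℂ := fun t => (1 - (t:ℂ)) * w0 with hzf_def
  set vf : ℝ → ℂ := fun t => ((starRingEnd ℂ) (zf t))⁻¹ with hvf_def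
  have hmem : ∀ᶠ t in l, t ∈ Set.Ioo (0:ℝ) (1/2) := by
    apply Ioo_mem_nhdsGT_of_mem
    exact ⟨le_refl _, by norm_num⟩
  have h1t : ∀ t : ℝ, t ∈ Set.Ioo (0:ℝ) (1/2) → (1 - (t:ℂ)) ≠ 0 := by
    intro t ht h
    have : (t:ℂ) = 1 := by linear_combination -h
    have : t = 1 := by exact_mod_cast this
    linarith [ht.2]
  have hvf_eq : ∀ t : ℝ, vf t = ((1:ℂ) - t)⁻¹ * z0 := by
    intro t
    rw [hvf_def]
    simp only [hzf_def]
    rw [_root_.map_mul, map_sub, _root_.map_one, Complex.conj_ofReal, hw0_def, map_inv₀, Complex.conj_conj,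
      mul_inv, inv_inv]
  have hzf_t : Tendsto zf l (𝓝 w0) := by
    have : Tendsto (fun t : ℝ => (1 - (t:ℂ)) * w0) (𝓝 0) (𝓝 ((1 - (0:ℝ):ℂ) * w0)) := by
      apply Tendsto.mul _ tendsto_const_nhds
      exact (continuous_const.sub Complex.continuous_ofReal).tendsto 0
    simp only [Complex.ofReal_zero, sub_zero, one_mul] at this
    exact this.mono_left nhdsWithin_le_nhds
  have hvf_t : Tendsto vf l (𝓝 z0) := by
    have h1 : Tendsto (fun t : ℝ => ((1:ℂ) - t)⁻¹ * z0) (𝓝 0) (𝓝 (((1:ℂ) - (0:ℝ))⁻¹ * z0)) := by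
      apply Tendsto.mul _ tendsto_const_nhds
      apply Tendsto.inv₀
      · exact (continuous_const.sub Complex.continuous_ofReal).tendsto 0
      · simp
    simp only [Complex.ofReal_zero, sub_zero, inv_one, one_mul] at h1
    have := h1.mono_left (nhdsWithin_le_nhds (s := Set.Ioi (0:ℝ)))
    refine this.congr fun t => ?_
    rw [hvf_eq t]
  have hzf_ne0 : ∀ᶠ t in l, zf t ≠ 0 := by
    filter_upwards [hmem] with t ht
    exact mul_ne_zero (h1t t ht) hw0ne
  have hzf_new0 : ∀ᶠ t in l, zf t ≠ w0 := by
    filter_upwards [hmem] with t ht h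
    rw [hzf_def] at h
    have h' : ((1:ℂ) - t) * w0 = 1 * w0 := by rw [one_mul]; exact h
    have h2 : ((1:ℂ) - t) = 1 := mul_right_cancel₀ hw0ne h'
    have : (t:ℂ) = 0 := by linear_combination -h2
    have : t = 0 := by exact_mod_cast this
    linarith [ht.1]
  have hvf_nez0 : ∀ᶠ t in l, vf t ≠ z0 := by
    filter_upwards [hmem] with t ht h
    rw [hvf_eq t] at h
    have h' : ((1:ℂ) - t)⁻¹ * z0 = 1 * z0 := by rw [one_mul]; exact h
    have h2 : ((1:ℂ) - t)⁻¹ = 1 := mul_right_cancel₀ hz0 h'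
    rw [inv_eq_one] at h2
    have : (t:ℂ) = 0 := by linear_combination -h2
    have : t = 0 := by exact_mod_cast this
    linarith [ht.1]
  -- eventually all denominators nonzero at zf t and vf t
  have hallz : ∀ᶠ t in l, ∀ i j, Polynomial.eval (zf t) (P i j).denom ≠ 0 := by
    rw [eventually_all]; intro i; rw [eventually_all]; intro j
    exact aux_eventually_eval_ne _ (RatFunc.denom_ne_zero _) hzf_t hzf_new0
  have hallv : ∀ᶠ t in l, ∀ i j, Polynomial.eval (vf t) (P i j).denom ≠ 0 := by
    rw [eventually_all]; intro i; rw [eventually_all]; intro j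
    exact aux_eventually_eval_ne _ (RatFunc.denom_ne_zero _) hvf_t hvf_nez0
  -- evaluated matrices
  set Pz : ℝ → Matrix (Fin m) (Fin k) ℂ :=
    fun t => Matrix.of fun i j => (P i j).eval (RingHom.id ℂ) (zf t) with hPz_def
  set Mz : ℝ → Matrix (Fin m) (Fin k) ℂ :=
    fun t => Matrix.of fun i j => (P i j).eval (RingHom.id ℂ) (vf t) with hMz_def
  set P0 : Matrix (Fin m) (Fin k) ℂ :=
    Matrix.of fun i j => (P i j).eval (RingHom.id ℂ) w0 with hP0_def
  have hPz_t : Tendsto Pz l (𝓝 P0) := aux_tendsto_Pev P (fun i j => hanal i j w0 habs_w0) hzf_t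
  set A : ℝ → Matrix (Fin k) (Fin k) ℂ := fun t => (Pz t)ᴴ * Pz t with hA_def
  set A0 : Matrix (Fin k) (Fin k) ℂ := P0ᴴ * P0 with hA0_def
  have hPzH_t : Tendsto (fun t => (Pz t)ᴴ) l (𝓝 P0ᴴ) :=
    ((continuous_id.matrix_conjTranspose).tendsto P0).comp hPz_t
  have hA_t : Tendsto A l (𝓝 A0) := aux_tendsto_mul hPzH_t hPz_t
  have hA0det : IsUnit A0.det := by
    apply aux_isUnit_det_of_rank_eq
    rw [hA0_def, Matrix.rank_conjTranspose_mul_self]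
    exact hfull w0 habs_w0
  have hdet_t : Tendsto (fun t => (A t).det) l (𝓝 A0.det) :=
    ((continuous_id.matrix_det).tendsto A0).comp hA_t
  have hdet_ne : A0.det ≠ 0 := hA0det.ne_zero
  have hdet_ev : ∀ᶠ t in l, (A t).det ≠ 0 := hdet_t.eventually_ne hdet_ne
  -- S tendsto
  have hS_t : Tendsto (fun t => S (zf t)) l (𝓝 (S w0)) := by
    have hT : Tendsto (fun t => ∑ n ∈ Finset.Icc (-(N:ℤ)) (N:ℤ), (zf t) ^ n • Cf n) l
        (𝓝 (∑ n ∈ Finset.Icc (-(N:ℤ)) (N:ℤ), w0 ^ n • Cf n)) := by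
      apply aux_tendsto_matrix
      intro i j
      simp only [Matrix.sum_apply, Matrix.smul_apply, smul_eq_mul]
      apply tendsto_finset_sum
      intro n _
      exact (((continuousAt_zpow₀ w0 n (Or.inl hw0ne)).tendsto).comp hzf_t).mul tendsto_const_nhds
    rw [hS w0 hw0ne]
    apply Tendsto.congr' _ hT
    filter_upwards [hzf_ne0] with t ht
    exact (hS _ ht).symm
  -- factorization
  have hfact : ∀ᶠ t in l, S (zf t) = Pz t * (Mz t)ᴴ := by
    filter_upwards [hzf_ne0, hallz, hallv] with t h0 h1 h2
    exact hfac (zf t) h0 h1 h2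
  -- inverse identity
  have hMid : ∀ᶠ t in l, (Mz t)ᴴ = (A t).det⁻¹ • ((A t).adjugate * ((Pz t)ᴴ * S (zf t))) := by
    filter_upwards [hfact, hdet_ev] with t hft hdt
    have h1 : (Pz t)ᴴ * S (zf t) = A t * (Mz t)ᴴ := by rw [hft, hA_def, Matrix.mul_assoc]
    rw [h1, ← Matrix.mul_assoc, Matrix.adjugate_mul, Matrix.smul_mul, Matrix.one_mul,
      smul_smul, inv_mul_cancel₀ hdt, one_smul]
  have hadj_t : Tendsto (fun t => (A t).adjugate) l (𝓝 A0.adjugate) :=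
    ((continuous_id.matrix_adjugate).tendsto A0).comp hA_t
  have hRHS_t : Tendsto (fun t => (A t).det⁻¹ • ((A t).adjugate * ((Pz t)ᴴ * S (zf t)))) l
      (𝓝 (A0.det⁻¹ • (A0.adjugate * (P0ᴴ * S w0)))) :=
    Tendsto.smul (hdet_t.inv₀ hdet_ne) (aux_tendsto_mul hadj_t (aux_tendsto_mul hPzH_t hS_t))
  have hMH_t : Tendsto (fun t => (Mz t)ᴴ j0 i0) l
      (𝓝 ((A0.det⁻¹ • (A0.adjugate * (P0ᴴ * S w0))) j0 i0)) := by
    refine (aux_tendsto_entry hRHS_t j0 i0).congr' ?_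
    filter_upwards [hMid] with t h
    rw [← h]
  have hblow := aux_tendsto_norm_eval_atTop (P i0 j0) hden hvf_t (hallv.mono fun t h => h i0 j0)
  have htop : Tendsto (fun t => ‖(Mz t)ᴴ j0 i0‖) l atTop := by
    refine hblow.congr fun t => ?_
    rw [Matrix.conjTranspose_apply]
    exact (norm_star _).symm
  exact not_tendsto_atTop_of_tendsto_nhds hMH_t.norm htop

private lemma aux_degree {m k N : ℕ} (Cf : ℤ → Matrix (Fin m) (Fin m) ℂ)
    (S : ℂ → Matrix (Fin m) (Fin m) ℂ)
    (hS : ∀ z : ℂ, z ≠ 0 → S z = ∑ n ∈ Finset.Icc (-(N : ℤ)) (N : ℤ), z ^ n • Cf n)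
    (P : Matrix (Fin m) (Fin k) (RatFunc ℂ))
    (hden1 : ∀ i j, (P i j).denom = 1)
    (hfull : ∀ z : ℂ, ‖z‖ < 1 →
      (Matrix.of fun i j => (P i j).eval (RingHom.id ℂ) z).rank = k)
    (hfac : ∀ z : ℂ, z ≠ 0 →
      (∀ i j, Polynomial.eval z (P i j).denom ≠ 0) →
      (∀ i j, Polynomial.eval ((starRingEnd ℂ) z)⁻¹ (P i j).denom ≠ 0) →
      S z = (Matrix.of fun i j => (P i j).eval (RingHom.id ℂ) z) *
        (Matrix.of fun i j => (P i j).eval (RingHom.id ℂ) ((starRingEnd ℂ) z)⁻¹)ᴴ)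
    (i0 : Fin m) (j0 : Fin k) : (P i0 j0).num.natDegree ≤ N := by
  classical
  have hdne : ∀ i j (z : ℂ), Polynomial.eval z (P i j).denom ≠ 0 := by
    intro i j z
    rw [hden1 i j]
    simp
  have heval : ∀ i j (z : ℂ), (P i j).eval (RingHom.id ℂ) z = (P i j).num.eval z := by
    intro i j z
    rw [aux_evalRat, hden1 i j]
    simp
  set l : Filter ℝ := 𝓝[>] (0:ℝ) with hl
  set zf : ℝ → ℂ := fun t => (t:ℂ) with hzf_def
  have hmem : ∀ᶠ t in l, t ∈ Set.Ioo (0:ℝ) 1 := Ioo_mem_nhdsGT_of_mem ⟨le_refl _, one_pos⟩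
  have hzf_ne0 : ∀ᶠ t in l, zf t ≠ 0 := by
    filter_upwards [hmem] with t ht
    simp only [hzf_def, ne_eq, Complex.ofReal_eq_zero]
    exact ne_of_gt ht.1
  have hzf_t : Tendsto zf l (𝓝 0) := by
    have := Complex.continuous_ofReal.tendsto 0
    simp only [Complex.ofReal_zero] at this
    exact this.mono_left nhdsWithin_le_nhds
  set Pz : ℝ → Matrix (Fin m) (Fin k) ℂ :=
    fun t => Matrix.of fun i j => (P i j).eval (RingHom.id ℂ) (zf t) with hPz_def
  set P0 : Matrix (Fin m) (Fin k) ℂ :=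
    Matrix.of fun i j => (P i j).eval (RingHom.id ℂ) 0 with hP0_def
  have hPz_t : Tendsto Pz l (𝓝 P0) := aux_tendsto_Pev P (fun i j => hdne i j 0) hzf_t
  set A : ℝ → Matrix (Fin k) (Fin k) ℂ := fun t => (Pz t)ᴴ * Pz t with hA_def
  set A0 : Matrix (Fin k) (Fin k) ℂ := P0ᴴ * P0 with hA0_def
  have hPzH_t : Tendsto (fun t => (Pz t)ᴴ) l (𝓝 P0ᴴ) :=
    ((continuous_id.matrix_conjTranspose).tendsto P0).comp hPz_t
  have hA_t : Tendsto A l (𝓝 A0) := aux_tendsto_mul hPzH_t hPz_t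
  have hA0det : IsUnit A0.det := by
    apply aux_isUnit_det_of_rank_eq
    rw [hA0_def, Matrix.rank_conjTranspose_mul_self]
    exact hfull 0 (by simp)
  have hdet_t : Tendsto (fun t => (A t).det) l (𝓝 A0.det) :=
    ((continuous_id.matrix_det).tendsto A0).comp hA_t
  have hdet_ne : A0.det ≠ 0 := hA0det.ne_zero
  have hdet_ev : ∀ᶠ t in l, (A t).det ≠ 0 := hdet_t.eventually_ne hdet_ne
  have hadj_t : Tendsto (fun t => (A t).adjugate) l (𝓝 A0.adjugate) :=
    ((continuous_id.matrix_adjugate).tendsto A0).comp hA_t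
  -- the bounded matrix B
  set B : ℝ → Matrix (Fin k) (Fin m) ℂ :=
    fun t => (A t).det⁻¹ • ((A t).adjugate * (Pz t)ᴴ) with hB_def
  set B0 : Matrix (Fin k) (Fin m) ℂ := A0.det⁻¹ • (A0.adjugate * P0ᴴ) with hB0_def
  have hB_t : Tendsto B l (𝓝 B0) :=
    Tendsto.smul (hdet_t.inv₀ hdet_ne) (aux_tendsto_mul hadj_t hPzH_t)
  set Mz : ℝ → Matrix (Fin m) (Fin k) ℂ :=
    fun t => Matrix.of fun i j => (P i j).eval (RingHom.id ℂ) ((starRingEnd ℂ) (zf t))⁻¹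
    with hMz_def
  have hMid : ∀ᶠ t in l, (Mz t)ᴴ = B t * S (zf t) := by
    filter_upwards [hzf_ne0, hdet_ev] with t h0 hdt
    have hft := hfac (zf t) h0 (fun i j => hdne i j _) (fun i j => hdne i j _)
    have h1 : (Pz t)ᴴ * S (zf t) = A t * (Mz t)ᴴ := by rw [hft, hA_def, Matrix.mul_assoc]
    rw [hB_def, Matrix.smul_mul, Matrix.mul_assoc, h1, ← Matrix.mul_assoc,
      Matrix.adjugate_mul, Matrix.smul_mul, Matrix.one_mul, smul_smul,
      inv_mul_cancel₀ hdt, one_smul]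
  -- entry bounds
  set CS : Fin m → ℝ := fun v => ∑ n ∈ Finset.Icc (-(N:ℤ)) (N:ℤ), ‖Cf n v i0‖ with hCS_def
  have hSbd : ∀ᶠ t in l, ∀ v : Fin m, ‖S (zf t) v i0‖ ≤ CS v * t ^ (-(N:ℤ)) := by
    filter_upwards [hmem, hzf_ne0] with t ht h0
    intro v
    rw [hS _ h0]
    have hle : ‖(∑ n ∈ Finset.Icc (-(N:ℤ)) (N:ℤ), (zf t) ^ n • Cf n) v i0‖
        ≤ ∑ n ∈ Finset.Icc (-(N:ℤ)) (N:ℤ), ‖(zf t) ^ n * Cf n v i0‖ := by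
      rw [Matrix.sum_apply]
      refine le_trans (norm_sum_le _ _) ?_
      refine le_of_eq (Finset.sum_congr rfl fun n _ => ?_)
      rw [Matrix.smul_apply, smul_eq_mul]
    refine le_trans hle ?_
    rw [hCS_def, Finset.sum_mul]
    refine Finset.sum_le_sum fun n hn => ?_
    rw [norm_mul, norm_zpow]
    have hnorm_t : ‖zf t‖ = t := by
      simp only [hzf_def, Complex.norm_real]
      exact Real.norm_of_nonneg ht.1.le
    rw [hnorm_t, mul_comm]
    refine mul_le_mul_of_nonneg_left ?_ (norm_nonneg _)
    refine zpow_le_zpow_right_of_le_one₀ ht.1 ht.2.le ?_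
    exact (Finset.mem_Icc.1 hn).1
  have hBbd : ∀ᶠ t in l, ∀ v : Fin m, ‖B t j0 v‖ ≤ ‖B0 j0 v‖ + 1 := by
    rw [eventually_all]
    intro v
    exact ((aux_tendsto_entry hB_t j0 v).norm).eventually_le_const (lt_add_one _)
  have hCS0 : ∀ v, 0 ≤ CS v := fun v => Finset.sum_nonneg fun n _ => norm_nonneg _
  set CC : ℝ := ∑ v : Fin m, (‖B0 j0 v‖ + 1) * CS v with hCC_def
  have hbound : ∀ᶠ t : ℝ in l, ‖(P i0 j0).num.eval (((t:ℝ):ℂ))⁻¹‖ ≤ CC * t ^ (-(N:ℤ)) := by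
    filter_upwards [hMid, hSbd, hBbd, hmem] with t hid hSb hBb ht
    have hMent : (Mz t)ᴴ j0 i0 = (starRingEnd ℂ) ((P i0 j0).num.eval ((t:ℂ))⁻¹) := by
      rw [Matrix.conjTranspose_apply, hMz_def]
      simp only [Matrix.of_apply]
      rw [heval]
      have : ((starRingEnd ℂ) (zf t))⁻¹ = ((t:ℂ))⁻¹ := by
        simp only [hzf_def, Complex.conj_ofReal]
      rw [this]
      rfl
    have h1 : ‖(P i0 j0).num.eval ((t:ℂ))⁻¹‖ = ‖(Mz t)ᴴ j0 i0‖ := by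
      rw [hMent]
      exact (RCLike.norm_conj _).symm
    rw [h1, hid]
    have h2 : (B t * S (zf t)) j0 i0 = ∑ v, B t j0 v * S (zf t) v i0 := Matrix.mul_apply
    rw [h2]
    refine le_trans (norm_sum_le _ _) ?_
    rw [hCC_def, Finset.sum_mul]
    refine Finset.sum_le_sum fun v _ => ?_
    rw [norm_mul]
    have ht0 : (0:ℝ) < t ^ (-(N:ℤ)) := zpow_pos ht.1 _
    calc ‖B t j0 v‖ * ‖S (zf t) v i0‖
        ≤ (‖B0 j0 v‖ + 1) * (CS v * t ^ (-(N:ℤ))) := by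
          refine mul_le_mul (hBb v) (hSb v) (norm_nonneg _) ?_
          positivity
      _ = (‖B0 j0 v‖ + 1) * CS v * t ^ (-(N:ℤ)) := by ring
  -- extract an explicit neighborhood
  rw [hl, eventually_nhdsWithin_iff, Metric.eventually_nhds_iff] at hbound
  obtain ⟨ε, hε, hball⟩ := hbound
  apply aux_natDegree_le_of_bound (P i0 j0).num N CC (max (2/ε) 1)
  intro x hx
  have hx1 : (1:ℝ) ≤ x := le_trans (le_max_right _ _) hx
  have hx0 : (0:ℝ) < x := lt_of_lt_of_le one_pos hx1
  have hxε : 2/ε ≤ x := le_trans (le_max_left _ _) hx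
  have htmem : x⁻¹ ∈ Set.Ioi (0:ℝ) := Set.mem_Ioi.2 (inv_pos.2 hx0)
  have hdist : dist x⁻¹ (0:ℝ) < ε := by
    rw [Real.dist_eq, sub_zero, abs_of_pos (inv_pos.2 hx0)]
    have hhalf : 0 < ε/2 := by positivity
    have : x⁻¹ ≤ ε/2 := (inv_le_comm₀ hx0 hhalf).mpr (by rw [inv_div]; exact hxε)
    linarith
  have := hball hdist htmem
  have hcast : (((x⁻¹ : ℝ)):ℂ)⁻¹ = (x:ℂ) := by
    push_cast
    rw [inv_inv]
  rw [hcast] at this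
  have hzpow : (x⁻¹:ℝ) ^ (-(N:ℤ)) = x ^ N := by
    rw [_root_.zpow_neg, _root_.inv_zpow, inv_inv, zpow_natCast]
  rw [hzpow] at this
  exact this

/-- If the Laurent matrix polynomial `S` (of order `N`, nonnegative definite of rank `k`
a.e. on the circle) factors as `S = S⁺ (S⁺)*` with `S⁺` an `m × k` rational matrix function
analytic and of full rank `k` in the open unit disk, then `S⁺` is a matrix polynomial of
degree at most `N`. -/
theorem stmt15 {m k N : ℕ} (Cf : ℤ → Matrix (Fin m) (Fin m) ℂ)
    (S : ℂ → Matrix (Fin m) (Fin m) ℂ)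
    (hS : ∀ z : ℂ, z ≠ 0 → S z = ∑ n ∈ Finset.Icc (-(N : ℤ)) (N : ℤ), z ^ n • Cf n)
    (hpos : ∀ᵐ θ : ℝ ∂volume, (S (Complex.exp (θ * Complex.I))).PosSemidef)
    (hrank : ∀ᵐ θ : ℝ ∂volume, (S (Complex.exp (θ * Complex.I))).rank = k)
    (P : Matrix (Fin m) (Fin k) (RatFunc ℂ))
    (hanal : ∀ i j, ∀ z : ℂ, ‖z‖ < 1 → Polynomial.eval z (P i j).denom ≠ 0)
    (hfull : ∀ z : ℂ, ‖z‖ < 1 →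
      (Matrix.of fun i j => (P i j).eval (RingHom.id ℂ) z).rank = k)
    (hfac : ∀ z : ℂ, z ≠ 0 →
      (∀ i j, Polynomial.eval z (P i j).denom ≠ 0) →
      (∀ i j, Polynomial.eval ((starRingEnd ℂ) z)⁻¹ (P i j).denom ≠ 0) →
      S z = (Matrix.of fun i j => (P i j).eval (RingHom.id ℂ) z) *
        (Matrix.of fun i j => (P i j).eval (RingHom.id ℂ) ((starRingEnd ℂ) z)⁻¹)ᴴ) :
    ∀ i j, ∃ p : Polynomial ℂ, p.natDegree ≤ N ∧
      P i j = algebraMap (Polynomial ℂ) (RatFunc ℂ) p := by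
  classical
  have hnoroot : ∀ i j (z0 : ℂ), Polynomial.eval z0 (P i j).denom ≠ 0 := by
    intro i j z0 hd
    rcases lt_trichotomy (‖z0‖) 1 with hlt | heq | hgt
    · exact hanal i j z0 hlt hd
    · exact aux_circle Cf S hS P hfac i j z0 heq hd
    · exact aux_outside Cf S hS P hanal hfull hfac i j z0 hgt hd
  have hden1 : ∀ i j, (P i j).denom = 1 := by
    intro i j
    have hm := (P i j).monic_denom
    rw [← hm.natDegree_eq_zero]
    by_contra hne
    have hpos' : 0 < (P i j).denom.degree := by
      rw [← Polynomial.natDegree_pos_iff_degree_pos]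
      omega
    obtain ⟨z, hz⟩ := Complex.exists_root hpos'
    exact hnoroot i j z hz
  intro i j
  refine ⟨(P i j).num, aux_degree Cf S hS P hden1 hfull hfac i j, ?_⟩
  conv_lhs => rw [← RatFunc.num_div_denom (P i j)]
  rw [hden1, _root_.map_one, div_one]
end
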